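/- arXiv:2401.03252 — 9 statements merged into one kernel-verified Lean document; each statement's English description precedes it below -/
import Mathlib

section
/- Let ν be the unique positive real root of the equation (1+ν)·log(1+ν⁻¹) + log(ν)/(1+ν) = 1, and set T = e·(1+ν⁻¹)^(−ν) and T′ = e·(1+ν⁻¹)^(−(1+ν)). Then the pair (T′, T) satisfies T′·log T′ − T′ = T·log T − T and T′·log T′ = (T′ − T)·log(T − T′). -/
theorem stmt_4 (ν T T' : ℝ) (hν : 0 < ν)
    (hroot : (1 + ν) * Real.log (1 + ν⁻¹) + Real.log ν / (1 + ν) = 1)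
    (hT : T = Real.exp 1 * (1 + ν⁻¹) ^ (-ν))
    (hT' : T' = Real.exp 1 * (1 + ν⁻¹) ^ (-(1 + ν))) :
    T' * Real.log T' - T' = T * Real.log T - T ∧
    T' * Real.log T' = (T' - T) * Real.log (T - T') := by
  have hν0 : ν ≠ 0 := hν.ne'
  have hν1 : (0:ℝ) < 1 + ν := by linarith
  have hν1' : (1+ν) ≠ 0 := hν1.ne'
  have hu : (0:ℝ) < 1 + ν⁻¹ := by positivity
  set L := Real.log (1 + ν⁻¹) with hL
  have hdiv : (1:ℝ) + ν⁻¹ = (1+ν)/ν := by field_simp; ring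
  have hLeq : L = Real.log (1+ν) - Real.log ν := by
    rw [hL, hdiv, Real.log_div hν1' hν0]
  have hTval : T = Real.exp (1 - ν * L) := by
    rw [hT, Real.rpow_def_of_pos hu, ← hL, ← Real.exp_add]; ring_nf
  have hT'val : T' = Real.exp (1 - (1+ν) * L) := by
    rw [hT', Real.rpow_def_of_pos hu, ← hL, ← Real.exp_add]; ring_nf
  have hTpos : 0 < T := by rw [hTval]; exact Real.exp_pos _
  have hlogT : Real.log T = 1 - ν * L := by rw [hTval, Real.log_exp]
  have hlogT' : Real.log T' = 1 - (1+ν) * L := by rw [hT'val, Real.log_exp]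
  have hT'eq : T' = T * (ν / (1+ν)) := by
    rw [hTval, hT'val]
    have h2 : ν / (1+ν) = Real.exp (Real.log ν - Real.log (1+ν)) := by
      rw [Real.exp_sub, Real.exp_log hν, Real.exp_log hν1]
    rw [h2, ← Real.exp_add, hLeq]; ring_nf
  have hsub : T - T' = T / (1+ν) := by rw [hT'eq]; field_simp; ring
  have hlogsub : Real.log (T - T') = Real.log T - Real.log (1+ν) := by
    rw [hsub, Real.log_div hTpos.ne' hν1']
  have hlogν : Real.log ν = (1+ν) - (1+ν)^2 * L := by
    have h := hroot
    field_simp at h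
    nlinarith [h]
  have hlog1ν : Real.log (1+ν) = L + (1+ν) - (1+ν)^2 * L := by
    rw [hlogν] at hLeq; linarith
  constructor
  · rw [hlogT, hlogT', hT'eq]; field_simp; ring
  · rw [hlogT', hlogsub, hT'eq, hlogT, hlog1ν]; field_simp; ring
end

section
/- Let 0 < a < b. Then ∫_a^b √(ab)/(π·x·√((b−x)(x−a))) dx = 1. -/
open Real MeasureTheory Set Filter intervalIntegral

theorem stmt_7 (a b : ℝ) (ha : 0 < a) (hab : a < b) :
    ∫ x in a..b, Real.sqrt (a * b) / (Real.pi * x * Real.sqrt ((b - x) * (x - a))) = 1 := by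
  have hb : 0 < b := ha.trans hab
  have hba : 0 < b - a := sub_pos.2 hab
  have hπ : 0 < Real.pi := Real.pi_pos
  set g : ℝ → ℝ := fun θ => a + (b - a) * Real.sin θ ^ 2 with hgdef
  set g' : ℝ → ℝ := fun θ => (b - a) * (2 * Real.sin θ * Real.cos θ) with hg'def
  set f : ℝ → ℝ := fun x =>
    Real.sqrt (a * b) / (Real.pi * x * Real.sqrt ((b - x) * (x - a))) with hfdef
  -- image of (0, π/2) under g is (a, b)
  have himg : g '' Ioo 0 (Real.pi / 2) = Ioo a b := by
    ext y
    constructor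
    · rintro ⟨θ, ⟨h0, h2⟩, rfl⟩
      have hs : 0 < Real.sin θ := Real.sin_pos_of_pos_of_lt_pi h0 (h2.trans (by linarith))
      have hc : 0 < Real.cos θ := Real.cos_pos_of_mem_Ioo ⟨by linarith, h2⟩
      have hpyth := Real.sin_sq_add_cos_sq θ
      constructor
      · simp only [hgdef]
        nlinarith [mul_pos hba (pow_pos hs 2)]
      · simp only [hgdef]
        nlinarith [mul_pos hba (pow_pos hc 2)]
    · rintro ⟨hy1, hy2⟩
      have ht0 : 0 < (y - a) / (b - a) := div_pos (by linarith) hba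
      have ht1 : (y - a) / (b - a) < 1 := by rw [div_lt_one hba]; linarith
      have hst0 : 0 < Real.sqrt ((y - a) / (b - a)) := Real.sqrt_pos.2 ht0
      have hst1 : Real.sqrt ((y - a) / (b - a)) < 1 := by
        rw [show (1 : ℝ) = Real.sqrt 1 from (Real.sqrt_one).symm]
        exact Real.sqrt_lt_sqrt ht0.le ht1
      refine ⟨Real.arcsin (Real.sqrt ((y - a) / (b - a))), ⟨?_, ?_⟩, ?_⟩
      · exact Real.arcsin_pos.2 hst0
      · exact Real.arcsin_lt_pi_div_two.2 hst1
      · simp only [hgdef]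
        rw [Real.sin_arcsin (by linarith) hst1.le, Real.sq_sqrt ht0.le]
        field_simp
        ring
  -- derivative of g
  have hderiv : ∀ θ ∈ Ioo 0 (Real.pi / 2),
      HasDerivWithinAt g (g' θ) (Ioo 0 (Real.pi / 2)) θ := by
    intro θ _
    have h1 : HasDerivAt (fun θ => Real.sin θ ^ 2)
        (2 * Real.sin θ ^ 1 * Real.cos θ) θ := (Real.hasDerivAt_sin θ).pow 2
    have h2 : HasDerivAt g ((b - a) * (2 * Real.sin θ ^ 1 * Real.cos θ)) θ :=
      (h1.const_mul (b - a)).const_add a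
    simpa [hg'def, pow_one] using h2.hasDerivWithinAt
  -- injectivity
  have hinj : InjOn g (Ioo 0 (Real.pi / 2)) := by
    intro θ1 h1 θ2 h2 heq
    have hs1 : 0 < Real.sin θ1 := Real.sin_pos_of_pos_of_lt_pi h1.1 (h1.2.trans (by linarith))
    have hs2 : 0 < Real.sin θ2 := Real.sin_pos_of_pos_of_lt_pi h2.1 (h2.2.trans (by linarith))
    have hsin : Real.sin θ1 = Real.sin θ2 := by
      simp only [hgdef] at heq
      have h : Real.sin θ1 ^ 2 = Real.sin θ2 ^ 2 := mul_left_cancel₀ hba.ne' (by linarith)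
      calc Real.sin θ1 = Real.sqrt (Real.sin θ1 ^ 2) := (Real.sqrt_sq hs1.le).symm
        _ = Real.sqrt (Real.sin θ2 ^ 2) := by rw [h]
        _ = Real.sin θ2 := Real.sqrt_sq hs2.le
    exact Real.injOn_sin ⟨by linarith [h1.1], h1.2.le⟩ ⟨by linarith [h2.1], h2.2.le⟩ hsin
  have hchange := MeasureTheory.integral_image_eq_integral_abs_deriv_smul
    measurableSet_Ioo hderiv hinj f
  rw [himg] at hchange
  -- pointwise simplification on Ioo 0 (π/2)
  have hcongr : ∀ θ ∈ Ioo 0 (Real.pi / 2),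
      |g' θ| • f (g θ) = 2 * Real.sqrt (a * b) / (Real.pi * (a + (b - a) * Real.sin θ ^ 2)) := by
    intro θ ⟨h0, h2⟩
    have hs : 0 < Real.sin θ := Real.sin_pos_of_pos_of_lt_pi h0 (h2.trans (by linarith))
    have hc : 0 < Real.cos θ := Real.cos_pos_of_mem_Ioo ⟨by linarith, h2⟩
    have hpyth := Real.sin_sq_add_cos_sq θ
    have hgpos : 0 < g θ := by
      simp only [hgdef]
      nlinarith [mul_nonneg hba.le (sq_nonneg (Real.sin θ))]
    have hsq : Real.sqrt ((b - g θ) * (g θ - a)) = (b - a) * Real.sin θ * Real.cos θ := by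
      have hexp : (b - g θ) * (g θ - a) = ((b - a) * Real.sin θ * Real.cos θ) ^ 2 := by
        simp only [hgdef]
        linear_combination (-(b - a) ^ 2 * Real.sin θ ^ 2) * hpyth
      rw [hexp, Real.sqrt_sq (by positivity)]
    have habs : |g' θ| = (b - a) * (2 * Real.sin θ * Real.cos θ) := by
      rw [hg'def]; exact abs_of_pos (by positivity)
    rw [habs, smul_eq_mul, hfdef]
    simp only
    rw [hsq]
    have hgθ : g θ = a + (b - a) * Real.sin θ ^ 2 := rfl
    rw [hgθ]
    have hne : a + (b - a) * Real.sin θ ^ 2 > 0 := by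
      nlinarith [mul_nonneg hba.le (sq_nonneg (Real.sin θ))]
    field_simp
  -- the trig integral via FTC
  have key : ∫ θ in (0:ℝ)..(Real.pi / 2),
      2 * Real.sqrt (a * b) / (Real.pi * (a + (b - a) * Real.sin θ ^ 2)) = 1 := by
    set k := Real.sqrt (b / a) with hkdef
    have hk : 0 < k := Real.sqrt_pos.2 (by positivity)
    have hk2 : k ^ 2 = b / a := Real.sq_sqrt (by positivity)
    have hka : Real.sqrt (a * b) = k * a := by
      rw [show a * b = (k * a) ^ 2 by rw [mul_pow, hk2]; field_simp]
      exact Real.sqrt_sq (by positivity)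
    set F : ℝ → ℝ := fun θ => (2 / Real.pi) * Real.arctan (k * Real.tan θ) with hFdef
    have hpos : ∀ θ : ℝ, 0 < Real.pi * (a + (b - a) * Real.sin θ ^ 2) := by
      intro θ
      have h1 : 0 < a + (b - a) * Real.sin θ ^ 2 := by
        nlinarith [mul_nonneg hba.le (sq_nonneg (Real.sin θ))]
      exact mul_pos hπ h1
    have hcont : Continuous (fun θ : ℝ =>
        2 * Real.sqrt (a * b) / (Real.pi * (a + (b - a) * Real.sin θ ^ 2))) := by
      apply Continuous.div continuous_const
      · fun_prop
      · exact fun θ => (hpos θ).ne'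
    have hder : ∀ θ ∈ Ioo (0:ℝ) (Real.pi / 2), HasDerivAt F
        (2 * Real.sqrt (a * b) / (Real.pi * (a + (b - a) * Real.sin θ ^ 2))) θ := by
      intro θ ⟨h0, h2⟩
      have hc : 0 < Real.cos θ := Real.cos_pos_of_mem_Ioo ⟨by linarith, h2⟩
      have htan : HasDerivAt Real.tan (1 / Real.cos θ ^ 2) θ := Real.hasDerivAt_tan hc.ne'
      have h1 : HasDerivAt (fun θ => k * Real.tan θ) (k * (1 / Real.cos θ ^ 2)) θ :=
        htan.const_mul k
      have h2' : HasDerivAt (fun θ => Real.arctan (k * Real.tan θ))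
          ((1 / (1 + (k * Real.tan θ) ^ 2)) * (k * (1 / Real.cos θ ^ 2))) θ :=
        by have := (Real.hasDerivAt_arctan (k * Real.tan θ)).comp θ h1; exact this
      have h3 : HasDerivAt F
          ((2 / Real.pi) * ((1 / (1 + (k * Real.tan θ) ^ 2)) * (k * (1 / Real.cos θ ^ 2)))) θ :=
        h2'.const_mul (2 / Real.pi)
      convert h3 using 1
      rw [Real.tan_eq_sin_div_cos, hka]
      have hpyth := Real.sin_sq_add_cos_sq θ
      have h1k : 0 < 1 + (k * (Real.sin θ / Real.cos θ)) ^ 2 := by positivity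
      have hne : a + (b - a) * Real.sin θ ^ 2 > 0 := by
        nlinarith [mul_nonneg hba.le (sq_nonneg (Real.sin θ))]
      field_simp
      have hk2' : a * k ^ 2 = b := by rw [hk2]; field_simp
      linear_combination a * hpyth + Real.sin θ ^ 2 * hk2'
    have hlim0 : Tendsto F (nhdsWithin 0 (Ioi 0)) (nhds 0) := by
      have : ContinuousAt F 0 := by
        apply ContinuousAt.mul continuousAt_const
        apply Real.continuous_arctan.continuousAt.comp
        exact continuousAt_const.mul (Real.continuousAt_tan.2 (by simp))
      have hF0 : F 0 = 0 := by simp [hFdef]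
      simpa [hF0] using this.continuousWithinAt.tendsto
    have hlim1 : Tendsto F (nhdsWithin (Real.pi / 2) (Iio (Real.pi / 2))) (nhds 1) := by
      have h1 : Tendsto (fun θ => k * Real.tan θ) (nhdsWithin (Real.pi / 2)
          (Iio (Real.pi / 2))) atTop := Real.tendsto_tan_pi_div_two.const_mul_atTop hk
      have h2 : Tendsto (fun θ => Real.arctan (k * Real.tan θ))
          (nhdsWithin (Real.pi / 2) (Iio (Real.pi / 2))) (nhds (Real.pi / 2)) :=
        (Real.tendsto_arctan_atTop.mono_right nhdsWithin_le_nhds).comp h1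
      have h3 := h2.const_mul (2 / Real.pi)
      have : 2 / Real.pi * (Real.pi / 2) = 1 := by field_simp
      rwa [this] at h3
    have := intervalIntegral.integral_eq_sub_of_hasDerivAt_of_tendsto
      (by positivity : (0:ℝ) < Real.pi / 2) hder
      (hcont.intervalIntegrable _ _) hlim0 hlim1
    rw [this]; ring
  calc ∫ x in a..b, f x = ∫ x in Ioo a b, f x := by
        rw [intervalIntegral.integral_of_le hab.le, MeasureTheory.integral_Ioc_eq_integral_Ioo]
    _ = ∫ θ in Ioo 0 (Real.pi / 2), |g' θ| • f (g θ) := hchange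
    _ = ∫ θ in Ioo 0 (Real.pi / 2),
          2 * Real.sqrt (a * b) / (Real.pi * (a + (b - a) * Real.sin θ ^ 2)) :=
        MeasureTheory.setIntegral_congr_fun measurableSet_Ioo hcongr
    _ = ∫ θ in (0:ℝ)..(Real.pi / 2),
          2 * Real.sqrt (a * b) / (Real.pi * (a + (b - a) * Real.sin θ ^ 2)) := by
        rw [intervalIntegral.integral_of_le (by positivity : (0:ℝ) ≤ Real.pi / 2),
          MeasureTheory.integral_Ioc_eq_integral_Ioo]
    _ = 1 := key
end

section
/- Let 0 < a < b, c = (b−a)/2, and m = (a+b)/2. Then ∫_a^b (m−x)·x/(π·√((b−x)(x−a))) dx = −c²/2. -/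
open Real MeasureTheory intervalIntegral

lemma inv_sqrt_integrable (a m b : ℝ) (ham : a < m) (hmb : m < b) :
    IntervalIntegrable (fun x => (Real.sqrt ((b - x) * (x - a)))⁻¹) volume a b := by
  have hcont : Continuous (fun x : ℝ => Real.sqrt ((b - x) * (x - a))) :=
    ((continuous_const.sub continuous_id).mul (continuous_id.sub continuous_const)).sqrt
  have hmeas : ∀ p q : ℝ, AEStronglyMeasurable (fun x => (Real.sqrt ((b - x) * (x - a)))⁻¹)
      (volume.restrict (Set.uIoc p q)) :=
    fun p q => (hcont.measurable.inv).aestronglyMeasurable.restrict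
  have hL : IntervalIntegrable (fun x => (Real.sqrt ((b - x) * (x - a)))⁻¹) volume a m := by
    have h1 : IntervalIntegrable (fun x : ℝ => x ^ (-(1/2) : ℝ)) volume 0 (m - a) :=
      intervalIntegral.intervalIntegrable_rpow' (by norm_num)
    have h2 : IntervalIntegrable (fun x : ℝ => (x - a) ^ (-(1/2) : ℝ)) volume a m := by
      simpa using h1.comp_sub_right a
    have h3 := h2.const_mul (Real.sqrt (b - m))⁻¹
    refine h3.mono_fun' (hmeas a m) ?_
    rw [Set.uIoc_of_le ham.le]
    filter_upwards [ae_restrict_mem measurableSet_Ioc] with x hx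
    obtain ⟨hax, hxm⟩ := hx
    have hxa : 0 < x - a := by linarith
    have hbm : 0 < b - m := by linarith
    have hrw : (x - a) ^ (-(1/2) : ℝ) = (Real.sqrt (x - a))⁻¹ := by
      rw [Real.rpow_neg hxa.le, Real.sqrt_eq_rpow]
    rw [hrw, Real.norm_eq_abs, abs_of_nonneg (by positivity), ← mul_inv,
      ← Real.sqrt_mul hbm.le]
    rw [inv_le_inv₀ (Real.sqrt_pos.2 (by nlinarith)) (Real.sqrt_pos.2 (by nlinarith))]
    exact Real.sqrt_le_sqrt (by nlinarith)
  have hR : IntervalIntegrable (fun x => (Real.sqrt ((b - x) * (x - a)))⁻¹) volume m b := by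
    have h1 : IntervalIntegrable (fun x : ℝ => x ^ (-(1/2) : ℝ)) volume 0 (b - m) :=
      intervalIntegral.intervalIntegrable_rpow' (by norm_num)
    have h2 : IntervalIntegrable (fun x : ℝ => (b - x) ^ (-(1/2) : ℝ)) volume m b := by
      have := (h1.comp_sub_left b).symm
      simpa using this
    have h3 := h2.const_mul (Real.sqrt (m - a))⁻¹
    refine h3.mono_fun' (hmeas m b) ?_
    rw [Set.uIoc_of_le hmb.le]
    filter_upwards [ae_restrict_mem measurableSet_Ioc] with x hx
    obtain ⟨hmx, hxb⟩ := hx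
    have hxb' : 0 ≤ b - x := by linarith
    have hma : 0 < m - a := by linarith
    have hrw : (b - x) ^ (-(1/2) : ℝ) = (Real.sqrt (b - x))⁻¹ := by
      rw [Real.rpow_neg hxb', Real.sqrt_eq_rpow]
    rw [hrw, Real.norm_eq_abs, abs_of_nonneg (by positivity), ← mul_inv,
      ← Real.sqrt_mul hma.le]
    rcases eq_or_lt_of_le hxb' with h | h
    · simp [h.symm]
    rw [inv_le_inv₀ (Real.sqrt_pos.2 (by nlinarith)) (Real.sqrt_pos.2 (by nlinarith))]
    exact Real.sqrt_le_sqrt (by nlinarith)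
  exact hL.trans hR

theorem stmt_9 (a b c m : ℝ) (ha : 0 < a) (hab : a < b)
    (hc : c = (b - a) / 2) (hm : m = (a + b) / 2) :
    ∫ x in a..b, (m - x) * x / (Real.pi * Real.sqrt ((b - x) * (x - a))) = -c ^ 2 / 2 := by
  have ham : a < m := by rw [hm]; linarith
  have hmb : m < b := by rw [hm]; linarith
  have hc0 : 0 < c := by rw [hc]; linarith
  have hcne : c ≠ 0 := ne_of_gt hc0
  have hπ : (Real.pi : ℝ) ≠ 0 := Real.pi_ne_zero
  set F : ℝ → ℝ := fun x =>
    ((m + (x - m) / 2) * Real.sqrt ((b - x) * (x - a))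
      - c ^ 2 / 2 * Real.arcsin ((x - m) / c)) / Real.pi with hF
  have hFcont : ContinuousOn F (Set.Icc a b) := by
    apply Continuous.continuousOn
    apply Continuous.div_const
    exact ((continuous_const.add ((continuous_id.sub continuous_const).div_const 2)).mul
        (((continuous_const.sub continuous_id).mul (continuous_id.sub continuous_const)).sqrt)).sub
      (continuous_const.mul (Real.continuous_arcsin.comp
        ((continuous_id.sub continuous_const).div_const c)))
  have hderiv : ∀ x ∈ Set.Ioo a b,
      HasDerivWithinAt F ((m - x) * x / (Real.pi * Real.sqrt ((b - x) * (x - a))))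
        (Set.Ioi x) x := by
    intro x hx
    obtain ⟨hax, hxb⟩ := hx
    have hprod : 0 < (b - x) * (x - a) := by nlinarith
    set s := Real.sqrt ((b - x) * (x - a)) with hsdef
    have hs : 0 < s := Real.sqrt_pos.mpr hprod
    have hsne : s ≠ 0 := ne_of_gt hs
    have hs2 : s ^ 2 = (b - x) * (x - a) := Real.sq_sqrt hprod.le
    have hinner : HasDerivAt (fun y => (b - y) * (y - a))
        ((-1) * (x - a) + (b - x) * 1) x :=
      (((hasDerivAt_id x).const_sub b).mul ((hasDerivAt_id x).sub_const a))
    have hsqrt : HasDerivAt (fun y => Real.sqrt ((b - y) * (y - a)))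
        (1 / (2 * s) * ((-1) * (x - a) + (b - x) * 1)) x :=
      (Real.hasDerivAt_sqrt (ne_of_gt hprod)).comp x hinner
    have hy1 : (x - m) / c ≠ -1 := by
      intro h
      rw [div_eq_iff hcne] at h
      rw [hm, hc] at h; linarith
    have hy2 : (x - m) / c ≠ 1 := by
      intro h
      rw [div_eq_iff hcne] at h
      rw [hm, hc] at h; linarith
    have hinner2 : HasDerivAt (fun y => (y - m) / c) (1 / c) x := by
      simpa using ((hasDerivAt_id x).sub_const m).div_const c
    have harc : HasDerivAt (fun y => Real.arcsin ((y - m) / c))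
        (1 / Real.sqrt (1 - ((x - m) / c) ^ 2) * (1 / c)) x :=
      by have := (Real.hasDerivAt_arcsin hy1 hy2).comp x hinner2; exact this
    have hid : (b - x) * (x - a) = c ^ 2 - (x - m) ^ 2 := by rw [hc, hm]; ring
    have hkey : Real.sqrt (1 - ((x - m) / c) ^ 2) = s / c := by
      have h1 : 1 - ((x - m) / c) ^ 2 = (s / c) ^ 2 := by
        rw [div_pow, div_pow, hs2, hid]
        field_simp
      rw [h1, Real.sqrt_sq (by positivity)]
    have hlin : HasDerivAt (fun y => m + (y - m) / 2) (1 / 2) x := by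
      simpa using (((hasDerivAt_id x).sub_const m).div_const 2).const_add m
    have hFd : HasDerivAt F
        (((1 / 2 * s + (m + (x - m) / 2) * (1 / (2 * s) * ((-1) * (x - a) + (b - x) * 1)))
          - c ^ 2 / 2 * (1 / Real.sqrt (1 - ((x - m) / c) ^ 2) * (1 / c))) / Real.pi) x :=
      ((hlin.mul hsqrt).sub (harc.const_mul (c ^ 2 / 2))).div_const Real.pi
    rw [hkey] at hFd
    have heq : (((1 / 2 * s + (m + (x - m) / 2) * (1 / (2 * s) * ((-1) * (x - a) + (b - x) * 1)))
          - c ^ 2 / 2 * (1 / (s / c) * (1 / c))) / Real.pi)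
        = (m - x) * x / (Real.pi * s) := by
      have h1 : (-1) * (x - a) + (b - x) * 1 = 2 * (m - x) := by rw [hm]; ring
      have h2 : s ^ 2 = c ^ 2 - (x - m) ^ 2 := by rw [hs2, hc, hm]; ring
      rw [h1]
      field_simp
      ring_nf
      linear_combination h2
    rw [heq] at hFd
    exact hFd.hasDerivWithinAt
  have hint : IntervalIntegrable
      (fun x => (m - x) * x / (Real.pi * Real.sqrt ((b - x) * (x - a)))) volume a b := by
    have hbase := inv_sqrt_integrable a m b ham hmb
    have h2 := hbase.mul_continuousOn (g := fun x => (m - x) * x / Real.pi)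
      (Continuous.continuousOn (by
        exact ((continuous_const.sub continuous_id).mul continuous_id).div_const Real.pi))
    have : (fun x => (Real.sqrt ((b - x) * (x - a)))⁻¹ * ((m - x) * x / Real.pi))
        = fun x => (m - x) * x / (Real.pi * Real.sqrt ((b - x) * (x - a))) := by
      funext x; ring
    rwa [this] at h2
  rw [intervalIntegral.integral_eq_sub_of_hasDeriv_right_of_le hab.le hFcont hderiv hint]
  have hb1 : (b - m) / c = 1 := by rw [div_eq_iff hcne, hm, hc]; ring
  have ha1 : (a - m) / c = -1 := by rw [div_eq_iff hcne, hm, hc]; ring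
  rw [hF]
  simp only [hb1, ha1, Real.arcsin_one, Real.arcsin_neg]
  rw [show (b - b) * (b - a) = 0 by ring, show (b - a) * (a - a) = 0 by ring, Real.sqrt_zero]
  field_simp
  ring
end

section
/- Let 0 < a < b. Then ∫_a^b √(ab)·x/(π·x·√((b−x)(x−a))) dx = √(ab), i.e., the measure with density √(ab)/(π·x·√((b−x)(x−a))) on [a,b] has expectation √(ab). -/
open Real intervalIntegral MeasureTheory

lemma aux_integrable_left (a b : ℝ) (hab : a < b) :
    IntervalIntegrable (fun x => 1 / Real.sqrt ((b - x) * (x - a))) MeasureTheory.volume a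
      ((a + b) / 2) := by
  have hba : (0:ℝ) < b - a := by linarith
  set c : ℝ := Real.sqrt ((b - a) / 2) with hc_def
  have hc : 0 < c := Real.sqrt_pos.2 (by linarith)
  have hint : IntervalIntegrable (fun x => c⁻¹ * (x - a) ^ (-(1/2) : ℝ)) MeasureTheory.volume a
      ((a + b) / 2) := by
    have h0 : IntervalIntegrable (fun x : ℝ => x ^ (-(1/2) : ℝ)) MeasureTheory.volume 0
        ((a + b) / 2 - a) := intervalIntegrable_rpow' (by norm_num)
    have := (h0.comp_sub_right a).const_mul c⁻¹
    simpa using this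
  apply hint.mono_fun
  · apply Measurable.aestronglyMeasurable
    exact Measurable.div measurable_const
      (((measurable_const.sub measurable_id').mul (measurable_id'.sub measurable_const)).sqrt)
  · filter_upwards [MeasureTheory.ae_restrict_mem measurableSet_uIoc] with x hx
    rw [Set.uIoc_of_le (by linarith)] at hx
    obtain ⟨hx1, hx2⟩ := hx
    have hxa : 0 < x - a := by linarith
    have hs : c * Real.sqrt (x - a) ≤ Real.sqrt ((b - x) * (x - a)) := by
      rw [hc_def, ← Real.sqrt_mul (by linarith)]
      exact Real.sqrt_le_sqrt (by nlinarith)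
    have hs0 : 0 < c * Real.sqrt (x - a) := mul_pos hc (Real.sqrt_pos.2 hxa)
    have hrw : (x - a) ^ (-(1/2) : ℝ) = (Real.sqrt (x - a))⁻¹ := by
      rw [Real.rpow_neg hxa.le, Real.sqrt_eq_rpow]
    simp only [norm_div, norm_one, Real.norm_eq_abs, norm_mul, norm_inv, hrw,
      abs_of_nonneg (Real.sqrt_nonneg _), abs_of_nonneg hc.le, ← mul_inv, ← one_div]
    rw [div_mul_div_comm, one_mul]
    exact one_div_le_one_div_of_le hs0 hs

lemma aux_integrable (a b : ℝ) (hab : a < b) :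
    IntervalIntegrable (fun x => 1 / Real.sqrt ((b - x) * (x - a))) MeasureTheory.volume a b := by
  have h1 := aux_integrable_left a b hab
  have h2 : IntervalIntegrable (fun x => 1 / Real.sqrt ((b - x) * (x - a))) MeasureTheory.volume
      ((a + b) / 2) b := by
    have h3 := h1.comp_sub_left (a + b)
    have e1 : a + b - a = b := by ring
    have e2 : a + b - (a + b) / 2 = (a + b) / 2 := by ring
    rw [e1, e2] at h3
    apply h3.symm.congr
    intro x _
    show (1:ℝ) / Real.sqrt ((b - (a + b - x)) * (a + b - x - a))
        = 1 / Real.sqrt ((b - x) * (x - a))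
    have e3 : (b - (a + b - x)) * (a + b - x - a) = (b - x) * (x - a) := by ring
    rw [e3]
  exact h1.trans h2

theorem stmt_10 (a b : ℝ) (ha : 0 < a) (hab : a < b) :
    ∫ x in a..b, Real.sqrt (a * b) * x / (Real.pi * x * Real.sqrt ((b - x) * (x - a)))
      = Real.sqrt (a * b) := by
  have hba : (0:ℝ) < b - a := by linarith
  have hpi := Real.pi_pos
  have hcong : ∫ x in a..b, Real.sqrt (a * b) * x / (Real.pi * x * Real.sqrt ((b - x) * (x - a)))
      = ∫ x in a..b, Real.sqrt (a * b) / Real.pi * (1 / Real.sqrt ((b - x) * (x - a))) := by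
    apply intervalIntegral.integral_congr
    intro x hx
    rw [Set.uIcc_of_le hab.le] at hx
    have hx0 : x ≠ 0 := by have := hx.1; intro h; rw [h] at this; linarith
    show Real.sqrt (a * b) * x / (Real.pi * x * Real.sqrt ((b - x) * (x - a)))
        = Real.sqrt (a * b) / Real.pi * (1 / Real.sqrt ((b - x) * (x - a)))
    have e1 : Real.sqrt (a * b) * x / (Real.pi * x * Real.sqrt ((b - x) * (x - a)))
        = x * Real.sqrt (a * b) / (x * (Real.pi * Real.sqrt ((b - x) * (x - a)))) := by
      ring_nf
    rw [e1, mul_div_mul_left _ _ hx0, div_mul_div_comm, mul_one]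
  rw [hcong, intervalIntegral.integral_const_mul]
  have hkey : ∫ x in a..b, 1 / Real.sqrt ((b - x) * (x - a)) = Real.pi := by
    have hFTC := intervalIntegral.integral_eq_sub_of_hasDerivAt_of_le hab.le
      (f := fun x => Real.arcsin ((2 * x - a - b) / (b - a)))
      (f' := fun x => 1 / Real.sqrt ((b - x) * (x - a)))
      ((Real.continuous_arcsin.comp (by continuity)).continuousOn) ?_ (aux_integrable a b hab)
    · have hFTC' : ∫ x in a..b, 1 / Real.sqrt ((b - x) * (x - a))
          = Real.arcsin ((2 * b - a - b) / (b - a)) - Real.arcsin ((2 * a - a - b) / (b - a)) :=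
        hFTC
      have h1 : (2 * b - a - b) / (b - a) = 1 := by
        rw [div_eq_one_iff_eq hba.ne']; ring
      have h2 : (2 * a - a - b) / (b - a) = -1 := by
        rw [div_eq_iff hba.ne']; ring
      rw [hFTC', h1, h2, Real.arcsin_one, Real.arcsin_neg, Real.arcsin_one]
      ring
    · intro x hx
      obtain ⟨hx1, hx2⟩ := hx
      have hu : HasDerivAt (fun x : ℝ => (2 * x - a - b) / (b - a)) (2 / (b - a)) x := by
        have h : HasDerivAt (fun x : ℝ => 2 * x - a - b) 2 x := by
          simpa using (((hasDerivAt_id x).const_mul 2).sub_const a).sub_const b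
        simpa using h.div_const (b - a)
      set u := (2 * x - a - b) / (b - a) with hu_def
      have hu1 : u < 1 := by rw [hu_def, div_lt_one hba]; linarith
      have hu2 : -1 < u := by rw [hu_def, lt_div_iff₀ hba]; linarith
      have harc := (Real.hasDerivAt_arcsin (x := u) (by linarith) (by linarith)).comp x hu
      have hs0 : 0 < Real.sqrt ((b - x) * (x - a)) :=
        Real.sqrt_pos.2 (mul_pos (by linarith) (by linarith))
      have hsq : Real.sqrt (1 - u ^ 2) = 2 * Real.sqrt ((b - x) * (x - a)) / (b - a) := by
        have h1 : 1 - u ^ 2 = 2 ^ 2 * ((b - x) * (x - a)) / (b - a) ^ 2 := by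
          rw [hu_def]; field_simp; ring
        rw [h1, Real.sqrt_div (by nlinarith), Real.sqrt_mul (by positivity),
          Real.sqrt_sq (by norm_num : (0:ℝ) ≤ 2), Real.sqrt_sq hba.le]
      refine harc.congr_deriv (Eq.symm ?_)
      rw [hsq, one_div_div]
      show 1 / Real.sqrt ((b - x) * (x - a))
          = (b - a) / (2 * Real.sqrt ((b - x) * (x - a))) * (2 / (b - a))
      rw [div_mul_div_comm, div_eq_div_iff hs0.ne' (by positivity)]
      ring
  rw [hkey]
  field_simp
end

section
/- Let 0 < a < b and suppose y ≤ a. Then ∫_a^b log|y−x|/(π·√((b−x)(x−a))) dx = 2·log((√(a−y)+√(b−y))/2). -/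
open Real MeasureTheory intervalIntegral Set Metric

-- integrability of log on [0,1]
lemma lem_il01 : IntervalIntegrable Real.log volume 0 1 := by
  have h : IntervalIntegrable (fun x : ℝ => -Real.log x) volume 0 1 := by
    apply intervalIntegral.intervalIntegrable_deriv_of_nonneg
      (g := fun x : ℝ => x - x * Real.log x)
    · exact (continuous_id.sub Real.continuous_mul_log).continuousOn
    · intro x hx
      simp only [min_def, max_def] at hx
      norm_num at hx
      have : HasDerivAt (fun x : ℝ => x - x * Real.log x) (1 - (Real.log x + 1)) x := by
        have h1 : HasDerivAt (fun x : ℝ => x * Real.log x) (Real.log x + 1) x :=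
          Real.hasDerivAt_mul_log (ne_of_gt hx.1)
        exact (hasDerivAt_id' x).sub h1
      convert this using 1; ring
    · intro x hx
      simp only [min_def, max_def] at hx
      norm_num at hx
      simp only [neg_nonneg]
      exact Real.log_nonpos (le_of_lt hx.1) (le_of_lt hx.2)
  have := h.neg
  convert this using 1; funext x; simp

lemma lem_il0pi : IntervalIntegrable Real.log volume 0 Real.pi := by
  apply lem_il01.trans
  apply intervalIntegrable_log
  intro h
  rw [Set.mem_uIcc] at h
  have := Real.pi_pos
  rcases h with h | h <;> linarith [h.1, h.2]

lemma lem_f_int : IntervalIntegrable (fun θ : ℝ => Real.log (2 - 2 * Real.cos θ)) volume 0 Real.pi := by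
  have hpi := Real.pi_pos
  have hB : IntervalIntegrable (fun θ : ℝ => Real.log 4 + 2 * Real.pi + 2 * |Real.log θ|)
      volume 0 Real.pi := by
    apply IntervalIntegrable.add intervalIntegrable_const
    exact (lem_il0pi.abs.const_mul 2)
  apply hB.mono_fun
  · apply Measurable.aestronglyMeasurable
    apply Real.measurable_log.comp
    fun_prop
  · filter_upwards [ae_restrict_mem measurableSet_uIoc] with θ hθ
    rw [Set.uIoc_of_le (le_of_lt hpi)] at hθ
    obtain ⟨h0, hπ⟩ := hθ
    -- key bounds
    have hsin : θ / Real.pi ≤ Real.sin (θ / 2) := by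
      have := Real.mul_le_sin (x := θ / 2) (by linarith) (by linarith)
      calc θ / Real.pi = 2 / Real.pi * (θ / 2) := by field_simp
        _ ≤ Real.sin (θ / 2) := this
    have hlow : 4 * (θ / Real.pi) ^ 2 ≤ 2 - 2 * Real.cos θ := by
      have hc : Real.sin (θ / 2) ^ 2 = 1 / 2 - Real.cos θ / 2 := by
        have := Real.sin_sq_eq_half_sub (θ / 2)
        rw [show 2 * (θ / 2) = θ by ring] at this
        linarith
      have h0' : 0 ≤ θ / Real.pi := by positivity
      nlinarith
    have hup : 2 - 2 * Real.cos θ ≤ 4 := by nlinarith [Real.neg_one_le_cos θ]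
    have hpos : 0 < 2 - 2 * Real.cos θ := by
      have : 0 < θ / Real.pi := by positivity
      nlinarith
    have hlogup : Real.log (2 - 2 * Real.cos θ) ≤ Real.log 4 :=
      Real.log_le_log hpos hup
    have hloglow : Real.log 4 + 2 * Real.log (θ / Real.pi) ≤ Real.log (2 - 2 * Real.cos θ) := by
      have h1 : Real.log (4 * (θ / Real.pi) ^ 2) ≤ Real.log (2 - 2 * Real.cos θ) :=
        Real.log_le_log (by positivity) hlow
      have h2 : Real.log (4 * (θ / Real.pi) ^ 2) = Real.log 4 + 2 * Real.log (θ / Real.pi) := by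
        rw [Real.log_mul (by norm_num) (by positivity), Real.log_pow]
        push_cast; ring
      linarith [h2 ▸ h1]
    have hlogq : Real.log (θ / Real.pi) = Real.log θ - Real.log Real.pi :=
      Real.log_div (ne_of_gt h0) (ne_of_gt hpi)
    have hlogpi : Real.log Real.pi ≤ Real.pi := by
      calc Real.log Real.pi ≤ Real.pi - 1 := Real.log_le_sub_one_of_pos hpi
        _ ≤ Real.pi := by linarith
    have hlogpi0 : 0 ≤ Real.log Real.pi := Real.log_nonneg (by linarith [Real.pi_gt_three])
    have h4 : (0:ℝ) ≤ Real.log 4 := Real.log_nonneg (by norm_num)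
    simp only [Real.norm_eq_abs]
    rw [abs_le]
    constructor
    · rw [abs_of_nonneg (by positivity)]
      have : -|Real.log θ| ≤ Real.log θ := neg_abs_le _
      nlinarith [abs_nonneg (Real.log θ)]
    · rw [abs_of_nonneg (by positivity)]
      nlinarith [abs_nonneg (Real.log θ), le_abs_self (Real.log θ)]


lemma lem_J1 : ∫ θ in (0:ℝ)..Real.pi, Real.log (2 - 2 * Real.cos θ) = 0 := by
  have hpi := Real.pi_pos
  -- g integrable
  have hg_int : IntervalIntegrable (fun θ : ℝ => Real.log (2 + 2 * Real.cos θ)) volume 0 Real.pi := by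
    have := lem_f_int.comp_sub_left Real.pi
    simp only [sub_self, sub_zero] at this
    have heq : (fun x : ℝ => Real.log (2 - 2 * Real.cos (Real.pi - x)))
        = fun x : ℝ => Real.log (2 + 2 * Real.cos x) := by
      funext x; rw [Real.cos_pi_sub]; ring_nf
    rw [heq] at this
    exact this.symm
  -- ∫ g = ∫ f
  have hg_eq : ∫ θ in (0:ℝ)..Real.pi, Real.log (2 + 2 * Real.cos θ)
      = ∫ θ in (0:ℝ)..Real.pi, Real.log (2 - 2 * Real.cos θ) := by
    have h := intervalIntegral.integral_comp_sub_left (a := 0) (b := Real.pi)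
      (fun θ : ℝ => Real.log (2 - 2 * Real.cos θ)) Real.pi
    simp only [sub_self, sub_zero] at h
    rw [← h]
    apply intervalIntegral.integral_congr
    intro x _
    show Real.log (2 + 2 * Real.cos x) = Real.log (2 - 2 * Real.cos (Real.pi - x))
    rw [Real.cos_pi_sub]; ring_nf
  -- f integrable on π..2π
  have hf2 : IntervalIntegrable (fun θ : ℝ => Real.log (2 - 2 * Real.cos θ))
      volume Real.pi (2 * Real.pi) := by
    have := lem_f_int.comp_sub_left (2 * Real.pi)
    simp only [sub_zero] at this
    rw [show (2:ℝ) * Real.pi - Real.pi = Real.pi by ring] at this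
    have heq : (fun x : ℝ => Real.log (2 - 2 * Real.cos (2 * Real.pi - x)))
        = fun x : ℝ => Real.log (2 - 2 * Real.cos x) := by
      funext x
      rw [show 2 * Real.pi - x = -x + 2 * Real.pi by ring, Real.cos_add_two_pi, Real.cos_neg]
    rw [heq] at this
    exact this.symm
  -- ∫_π^{2π} f = ∫ f
  have hsecond : ∫ θ in Real.pi..(2 * Real.pi), Real.log (2 - 2 * Real.cos θ)
      = ∫ θ in (0:ℝ)..Real.pi, Real.log (2 - 2 * Real.cos θ) := by
    have h := intervalIntegral.integral_comp_sub_left (a := 0) (b := Real.pi)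
      (fun θ : ℝ => Real.log (2 - 2 * Real.cos θ)) (2 * Real.pi)
    simp only [sub_zero] at h
    rw [show (2:ℝ) * Real.pi - Real.pi = Real.pi by ring] at h
    rw [← h]
    apply intervalIntegral.integral_congr
    intro x _
    show Real.log (2 - 2 * Real.cos (2 * Real.pi - x)) = Real.log (2 - 2 * Real.cos x)
    rw [show 2 * Real.pi - x = -x + 2 * Real.pi by ring, Real.cos_add_two_pi, Real.cos_neg]
  -- ∫_0^π f(2θ) dθ
  have hdouble : ∫ θ in (0:ℝ)..Real.pi, Real.log (2 - 2 * Real.cos (2 * θ))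
      = ∫ θ in (0:ℝ)..Real.pi, Real.log (2 - 2 * Real.cos θ) := by
    have h := intervalIntegral.integral_comp_mul_left (a := 0) (b := Real.pi)
      (fun θ : ℝ => Real.log (2 - 2 * Real.cos θ)) (by norm_num : (2:ℝ) ≠ 0)
    simp only [mul_zero] at h
    rw [h, ← intervalIntegral.integral_add_adjacent_intervals lem_f_int hf2, hsecond]
    simp only [smul_eq_mul]
    ring
  -- pointwise identity a.e.
  have hae : ∫ θ in (0:ℝ)..Real.pi, Real.log (2 - 2 * Real.cos (2 * θ))
      = ∫ θ in (0:ℝ)..Real.pi,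
        (Real.log (2 - 2 * Real.cos θ) + Real.log (2 + 2 * Real.cos θ)) := by
    apply intervalIntegral.integral_congr_ae
    have hne : ∀ᵐ θ : ℝ, θ ≠ Real.pi := by
      simp [ae_iff, measure_singleton]
    filter_upwards [hne] with θ hne hmem
    rw [Set.uIoc_of_le (le_of_lt hpi)] at hmem
    obtain ⟨h0, hπ'⟩ := hmem
    have hπ : θ < Real.pi := lt_of_le_of_ne hπ' hne
    have hs : 0 < Real.sin θ := Real.sin_pos_of_pos_of_lt_pi h0 hπ
    have hsq := Real.sin_sq_add_cos_sq θ
    have hc1 : Real.cos θ < 1 := by nlinarith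
    have hc2 : -1 < Real.cos θ := by nlinarith
    have hp1 : 0 < 2 - 2 * Real.cos θ := by linarith
    have hp2 : 0 < 2 + 2 * Real.cos θ := by linarith
    have hprod : 2 - 2 * Real.cos (2 * θ) = (2 - 2 * Real.cos θ) * (2 + 2 * Real.cos θ) := by
      rw [Real.cos_two_mul]; ring
    rw [hprod, Real.log_mul (ne_of_gt hp1) (ne_of_gt hp2)]
  have hsum := hae
  rw [hdouble, intervalIntegral.integral_add lem_f_int hg_int, hg_eq] at hsum
  linarith

lemma lem_Jlt (t : ℝ) (ht0 : 0 ≤ t) (ht1 : t < 1) :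
    ∫ θ in (0:ℝ)..(2 * Real.pi), Real.log (1 - 2 * t * Real.cos θ + t ^ 2) = 0 := by
  have hpi := Real.pi_pos
  set f : ℂ → ℂ := fun z => Complex.log (1 - t * z) with hfdef
  -- differentiability on closed ball
  have hdiff : DifferentiableOn ℂ f (closedBall (0:ℂ) 1) := by
    intro z hz
    apply DifferentiableAt.differentiableWithinAt
    have hslit : (1 - (t:ℂ) * z) ∈ Complex.slitPlane := by
      left
      simp only [Complex.sub_re, Complex.one_re, Complex.mul_re, Complex.ofReal_re,
        Complex.ofReal_im]
      have hzre : z.re ≤ 1 := by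
        calc z.re ≤ ‖z‖ := Complex.re_le_norm z
          _ ≤ 1 := by simpa [Complex.dist_eq] using (mem_closedBall.mp hz)
      have : t * z.re ≤ t := by nlinarith
      simp only [zero_mul, sub_zero]
      linarith
    exact (Complex.differentiableAt_log hslit).comp (f := fun z : ℂ => 1 - (t:ℂ) * z) z (by fun_prop)
  have hdc : DiffContOnCl ℂ f (ball (0:ℂ) 1) := by
    apply DifferentiableOn.diffContOnCl
    rwa [closure_ball (0:ℂ) one_ne_zero]
  have hint := hdc.circleIntegral_sub_inv_smul (w := 0) (by simp)
  have hf0 : f 0 = 0 := by simp [hfdef]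
  rw [hf0, smul_zero] at hint
  -- unfold circle integral
  rw [circleIntegral] at hint
  simp only [deriv_circleMap, circleMap, Complex.ofReal_one, zero_add, one_mul, sub_zero,
    smul_eq_mul] at hint
  -- integrand simplification
  have hsimp : ∀ θ : ℝ, Complex.exp (θ * Complex.I) * Complex.I *
      ((Complex.exp (θ * Complex.I))⁻¹ * f (Complex.exp (θ * Complex.I)))
      = Complex.I * f (Complex.exp (θ * Complex.I)) := by
    intro θ
    have hne : Complex.exp (θ * Complex.I) ≠ 0 := Complex.exp_ne_zero _
    field_simp
  rw [intervalIntegral.integral_congr (g := fun θ : ℝ =>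
      Complex.I * f (Complex.exp (θ * Complex.I))) (fun θ _ => hsimp θ)] at hint
  rw [intervalIntegral.integral_const_mul] at hint
  have hint2 : ∫ θ in (0:ℝ)..(2 * Real.pi), f (Complex.exp (θ * Complex.I)) = 0 := by
    rcases mul_eq_zero.mp hint with h | h
    · exact absurd h Complex.I_ne_zero
    · exact h
  -- take real parts
  have hcont : Continuous fun θ : ℝ => f (Complex.exp (θ * Complex.I)) := by
    rw [continuous_iff_continuousAt]
    intro θ
    have h1 : ContinuousAt Complex.log (1 - t * Complex.exp (θ * Complex.I)) := by
      apply continuousAt_clog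
      left
      simp only [Complex.sub_re, Complex.one_re, Complex.mul_re, Complex.ofReal_re,
        Complex.ofReal_im, zero_mul, sub_zero]
      have : (Complex.exp (θ * Complex.I)).re ≤ 1 := by
        calc (Complex.exp (θ * Complex.I)).re ≤ ‖_‖ := Complex.re_le_norm _
          _ = 1 := by rw [Complex.norm_exp_ofReal_mul_I]
      nlinarith
    have h2 : ContinuousAt (fun θ : ℝ => (1:ℂ) - t * Complex.exp (θ * Complex.I)) θ := by
      fun_prop
    exact ContinuousAt.comp (f := fun θ : ℝ => (1:ℂ) - t * Complex.exp (θ * Complex.I)) h1 h2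
  have hre : ∫ θ in (0:ℝ)..(2 * Real.pi),
      (f (Complex.exp (θ * Complex.I))).re = 0 := by
    have := ContinuousLinearMap.intervalIntegral_comp_comm Complex.reCLM
      ((hcont.intervalIntegrable 0 (2 * Real.pi)) : IntervalIntegrable _ volume _ _)
    rw [hint2] at this
    simpa using this
  -- identify the real part
  have hkey : ∀ θ : ℝ, (f (Complex.exp (θ * Complex.I))).re
      = Real.log (1 - 2 * t * Real.cos θ + t ^ 2) / 2 := by
    intro θ
    have hrw : (1 : ℂ) - t * Complex.exp (θ * Complex.I)
        = Complex.ofReal (1 - t * Real.cos θ) + Complex.ofReal (-(t * Real.sin θ)) * Complex.I := by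
      rw [Complex.exp_mul_I]
      push_cast
      ring
    have hnsq : Complex.normSq (1 - t * Complex.exp (θ * Complex.I))
        = 1 - 2 * t * Real.cos θ + t ^ 2 := by
      rw [hrw, Complex.normSq_add_mul_I]
      have := Real.sin_sq_add_cos_sq θ
      nlinarith
    simp only [hfdef, Complex.log_re]
    rw [Complex.norm_def, Real.log_sqrt (Complex.normSq_nonneg _), hnsq]
  rw [intervalIntegral.integral_congr (fun θ _ => hkey θ)] at hre
  rw [intervalIntegral.integral_div] at hre
  have := hre
  field_simp at this
  linarith


lemma lem_cont {t : ℝ} (ht0 : 0 ≤ t) (ht1 : t < 1) :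
    Continuous (fun θ : ℝ => Real.log (1 - 2 * t * Real.cos θ + t ^ 2)) := by
  have hpos : ∀ θ : ℝ, 0 < 1 - 2 * t * Real.cos θ + t ^ 2 := by
    intro θ
    have h1 := Real.neg_one_le_cos θ
    have h2 := Real.cos_le_one θ
    nlinarith
  exact Continuous.log (by fun_prop) (fun θ => ne_of_gt (hpos θ))

lemma lem_h_int (t : ℝ) (ht0 : 0 ≤ t) (ht1 : t ≤ 1) :
    IntervalIntegrable (fun θ : ℝ => Real.log (1 - 2 * t * Real.cos θ + t ^ 2))
      volume 0 Real.pi := by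
  rcases eq_or_lt_of_le ht1 with rfl | hlt
  · have : (fun θ : ℝ => Real.log (1 - 2 * 1 * Real.cos θ + 1 ^ 2))
        = fun θ : ℝ => Real.log (2 - 2 * Real.cos θ) := by
      funext θ; norm_num; ring_nf
    rw [this]; exact lem_f_int
  · exact (lem_cont ht0 hlt).intervalIntegrable 0 Real.pi

lemma lem_J (t : ℝ) (ht0 : 0 ≤ t) (ht1 : t ≤ 1) :
    ∫ θ in (0:ℝ)..Real.pi, Real.log (1 - 2 * t * Real.cos θ + t ^ 2) = 0 := by
  have hpi := Real.pi_pos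
  rcases eq_or_lt_of_le ht1 with rfl | hlt
  · have : (fun θ : ℝ => Real.log (1 - 2 * 1 * Real.cos θ + 1 ^ 2))
        = fun θ : ℝ => Real.log (2 - 2 * Real.cos θ) := by
      funext θ; norm_num; ring_nf
    rw [show (∫ θ in (0:ℝ)..Real.pi, Real.log (1 - 2 * 1 * Real.cos θ + 1 ^ 2))
        = ∫ θ in (0:ℝ)..Real.pi, Real.log (2 - 2 * Real.cos θ) by rw [this]]
    exact lem_J1
  · have hcont := lem_cont ht0 hlt
    have hsecond : ∫ θ in Real.pi..(2 * Real.pi), Real.log (1 - 2 * t * Real.cos θ + t ^ 2)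
        = ∫ θ in (0:ℝ)..Real.pi, Real.log (1 - 2 * t * Real.cos θ + t ^ 2) := by
      have h := intervalIntegral.integral_comp_sub_left (a := 0) (b := Real.pi)
        (fun θ : ℝ => Real.log (1 - 2 * t * Real.cos θ + t ^ 2)) (2 * Real.pi)
      simp only [sub_zero] at h
      rw [show (2:ℝ) * Real.pi - Real.pi = Real.pi by ring] at h
      rw [← h]
      apply intervalIntegral.integral_congr
      intro x _
      show Real.log (1 - 2 * t * Real.cos (2 * Real.pi - x) + t ^ 2) = _
      rw [show 2 * Real.pi - x = -x + 2 * Real.pi by ring, Real.cos_add_two_pi, Real.cos_neg]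
    have hfull := lem_Jlt t ht0 hlt
    rw [← intervalIntegral.integral_add_adjacent_intervals
      (hcont.intervalIntegrable 0 Real.pi) (hcont.intervalIntegrable Real.pi (2 * Real.pi)),
      hsecond] at hfull
    linarith


lemma lem_K (c r : ℝ) (hr : 0 < r) (hrc : r ≤ c) :
    ∫ θ in (0:ℝ)..Real.pi, Real.log (c - r * Real.cos θ)
      = Real.pi * Real.log ((c + Real.sqrt (c ^ 2 - r ^ 2)) / 2) := by
  have hpi := Real.pi_pos
  set s : ℝ := Real.sqrt (c ^ 2 - r ^ 2) with hs
  have hs0 : 0 ≤ s := Real.sqrt_nonneg _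
  have hssq : s ^ 2 = c ^ 2 - r ^ 2 := Real.sq_sqrt (by nlinarith)
  have hcs : 0 < c + s := by nlinarith
  set t : ℝ := r / (c + s) with ht
  have ht0 : 0 < t := div_pos hr hcs
  have ht1 : t ≤ 1 := by
    rw [div_le_one hcs]; nlinarith
  have htc : (c + s) * t = r := by
    rw [ht]; field_simp
  -- the key algebraic identity
  have hkey : ∀ θ : ℝ, c - r * Real.cos θ
      = ((c + s) / 2) * (1 - 2 * t * Real.cos θ + t ^ 2) := by
    intro θ
    have h1 : (c + s) * t ^ 2 = r * t := by
      rw [pow_two, ← mul_assoc, htc]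
    have h2 : r * t = c - s := by
      rw [ht, mul_div_assoc', div_eq_iff (ne_of_gt hcs)]; nlinarith
    linear_combination Real.cos θ * htc - (1/2) * h1 - (1/2) * h2
  -- positivity on Ioc 0 π
  have hpos : ∀ θ ∈ Set.Ioc (0:ℝ) Real.pi, 0 < 1 - 2 * t * Real.cos θ + t ^ 2 := by
    intro θ hθ
    have hsin : 0 ≤ Real.sin θ := Real.sin_nonneg_of_nonneg_of_le_pi (le_of_lt hθ.1) hθ.2
    have hclt : Real.cos θ < 1 := by
      rcases lt_or_eq_of_le hθ.2 with h | h
      · have hspos := Real.sin_pos_of_pos_of_lt_pi hθ.1 h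
        nlinarith [Real.sin_sq_add_cos_sq θ]
      · rw [h, Real.cos_pi]; norm_num
    nlinarith [Real.neg_one_le_cos θ]
  -- congruence
  have hcongr : ∫ θ in (0:ℝ)..Real.pi, Real.log (c - r * Real.cos θ)
      = ∫ θ in (0:ℝ)..Real.pi,
          (Real.log ((c + s) / 2) + Real.log (1 - 2 * t * Real.cos θ + t ^ 2)) := by
    apply intervalIntegral.integral_congr_ae
    apply Filter.Eventually.of_forall
    intro θ hθ
    rw [Set.uIoc_of_le (le_of_lt hpi)] at hθ
    have hp2 := hpos θ hθ
    rw [hkey θ, Real.log_mul (by positivity) (ne_of_gt hp2)]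
  rw [hcongr, intervalIntegral.integral_add intervalIntegrable_const
    (lem_h_int t (le_of_lt ht0) ht1), lem_J t (le_of_lt ht0) ht1,
    intervalIntegral.integral_const]
  simp [smul_eq_mul]


theorem stmt_11 (a b y : ℝ) (ha : 0 < a) (hab : a < b) (hy : y ≤ a) :
    ∫ x in a..b, Real.log |y - x| / (Real.pi * Real.sqrt ((b - x) * (x - a)))
      = 2 * Real.log ((Real.sqrt (a - y) + Real.sqrt (b - y)) / 2) := by
  have hpi := Real.pi_pos
  set m : ℝ := (a + b) / 2 with hm
  set r : ℝ := (b - a) / 2 with hr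
  have hr0 : 0 < r := by rw [hr]; linarith
  set g : ℝ → ℝ := fun θ => m - r * Real.cos θ with hg
  set F : ℝ → ℝ := fun x => Real.log |y - x| / (Real.pi * Real.sqrt ((b - x) * (x - a)))
    with hF
  -- strict monotonicity
  have hmono : StrictMonoOn g (Set.Icc 0 Real.pi) := by
    intro x hx z hz hxz
    have := Real.strictAntiOn_cos hx hz hxz
    simp only [hg]
    nlinarith
  have hinj : Set.InjOn g (Set.Ioo 0 Real.pi) :=
    hmono.injOn.mono Set.Ioo_subset_Icc_self
  have hg0 : g 0 = a := by simp [hg, hm, hr]; ring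
  have hgpi : g Real.pi = b := by simp [hg, hm, hr]; ring
  -- image
  have himg : g '' (Set.Ioo 0 Real.pi) = Set.Ioo a b := by
    apply Set.Subset.antisymm
    · rintro _ ⟨θ, hθ, rfl⟩
      exact ⟨hg0 ▸ hmono (Set.left_mem_Icc.mpr (le_of_lt hpi))
          (Set.Ioo_subset_Icc_self hθ) hθ.1,
        hgpi ▸ hmono (Set.Ioo_subset_Icc_self hθ)
          (Set.right_mem_Icc.mpr (le_of_lt hpi)) hθ.2⟩
    · have hcont : ContinuousOn g (Set.Icc 0 Real.pi) := by fun_prop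
      have := intermediate_value_Ioo (le_of_lt hpi) hcont
      rw [hg0, hgpi] at this
      exact this
  -- derivative
  have hderiv : ∀ θ ∈ Set.Ioo (0:ℝ) Real.pi,
      HasDerivWithinAt g (r * Real.sin θ) (Set.Ioo 0 Real.pi) θ := by
    intro θ _
    have h1 : HasDerivAt (fun θ : ℝ => m - r * Real.cos θ) (-(r * -Real.sin θ)) θ :=
      ((Real.hasDerivAt_cos θ).const_mul r).const_sub m
    have h2 : HasDerivAt g (r * Real.sin θ) θ := by
      convert h1 using 1; ring
    exact h2.hasDerivWithinAt
  -- change of variables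
  have hchg := integral_image_eq_integral_abs_deriv_smul measurableSet_Ioo hderiv hinj F
  rw [himg] at hchg
  -- LHS as set integral
  have hLHS : ∫ x in a..b, F x = ∫ x in Set.Ioo a b, F x := by
    rw [intervalIntegral.integral_of_le (le_of_lt hab), integral_Ioc_eq_integral_Ioo]
  -- simplify the pulled-back integrand
  have hcongr : ∫ θ in Set.Ioo (0:ℝ) Real.pi, |r * Real.sin θ| • F (g θ)
      = ∫ θ in Set.Ioo (0:ℝ) Real.pi, Real.log (m - r * Real.cos θ - y) / Real.pi := by
    apply setIntegral_congr_fun measurableSet_Ioo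
    intro θ hθ
    have hsin : 0 < Real.sin θ := Real.sin_pos_of_pos_of_lt_pi hθ.1 hθ.2
    have hclt : Real.cos θ < 1 := by
      nlinarith [Real.sin_sq_add_cos_sq θ, Real.cos_le_one θ]
    have hcgt : -1 < Real.cos θ := by
      nlinarith [Real.sin_sq_add_cos_sq θ, Real.neg_one_le_cos θ]
    have hb : b - g θ = r * (1 + Real.cos θ) := by simp [hg, hm, hr]; ring
    have ha' : g θ - a = r * (1 - Real.cos θ) := by simp [hg, hm, hr]; ring
    have hprod : (b - g θ) * (g θ - a) = (r * Real.sin θ) ^ 2 := by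
      rw [hb, ha']
      have hsc := Real.sin_sq_add_cos_sq θ
      linear_combination (-(r^2)) * hsc
    have hsqrt : Real.sqrt ((b - g θ) * (g θ - a)) = r * Real.sin θ := by
      rw [hprod, Real.sqrt_sq (by positivity)]
    have hgy : 0 < g θ - y := by
      have : a < g θ := by nlinarith [ha']
      linarith
    have habs : |y - g θ| = g θ - y := by
      rw [abs_sub_comm, abs_of_pos hgy]
    simp only [hF, smul_eq_mul]
    rw [hsqrt, habs, abs_of_pos (by positivity)]
    have hne : r * Real.sin θ ≠ 0 := by positivity
    have : g θ - y = m - r * Real.cos θ - y := by simp [hg]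
    rw [this]
    field_simp
  -- to interval integral
  have hIoo : ∫ θ in Set.Ioo (0:ℝ) Real.pi, Real.log (m - r * Real.cos θ - y) / Real.pi
      = ∫ θ in (0:ℝ)..Real.pi, Real.log ((m - y) - r * Real.cos θ) / Real.pi := by
    rw [intervalIntegral.integral_of_le (le_of_lt hpi), integral_Ioc_eq_integral_Ioo]
    congr 1
    funext θ
    ring_nf
  have hdiv : ∫ θ in (0:ℝ)..Real.pi, Real.log ((m - y) - r * Real.cos θ) / Real.pi
      = (∫ θ in (0:ℝ)..Real.pi, Real.log ((m - y) - r * Real.cos θ)) / Real.pi :=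
    intervalIntegral.integral_div _ _
  have hK := lem_K (m - y) r hr0 (by rw [hm, hr]; linarith)
  -- final algebra
  set u : ℝ := Real.sqrt (a - y) with hu
  set v : ℝ := Real.sqrt (b - y) with hv
  have hu0 : 0 ≤ u := Real.sqrt_nonneg _
  have hv0 : 0 ≤ v := Real.sqrt_nonneg _
  have hu2 : u ^ 2 = a - y := Real.sq_sqrt (by linarith)
  have hv2 : v ^ 2 = b - y := Real.sq_sqrt (by linarith)
  have hcsq : (m - y) ^ 2 - r ^ 2 = (u * v) ^ 2 := by
    rw [hm, hr]
    rw [mul_pow, hu2, hv2]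
    ring
  have hsqrt2 : Real.sqrt ((m - y) ^ 2 - r ^ 2) = u * v := by
    rw [hcsq, Real.sqrt_sq (by positivity)]
  have hfin : (m - y + Real.sqrt ((m - y) ^ 2 - r ^ 2)) / 2 = ((u + v) / 2) ^ 2 := by
    rw [hsqrt2, hm]
    have : m - y = (u ^ 2 + v ^ 2) / 2 := by rw [hm, hu2, hv2]; ring
    rw [hm] at this
    rw [this]
    ring
  calc ∫ x in a..b, F x = ∫ x in Set.Ioo a b, F x := hLHS
    _ = ∫ θ in Set.Ioo (0:ℝ) Real.pi, |r * Real.sin θ| • F (g θ) := hchg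
    _ = ∫ θ in (0:ℝ)..Real.pi, Real.log ((m - y) - r * Real.cos θ) / Real.pi := by
        rw [hcongr, hIoo]
    _ = (∫ θ in (0:ℝ)..Real.pi, Real.log ((m - y) - r * Real.cos θ)) / Real.pi := hdiv
    _ = Real.log (((u + v) / 2) ^ 2) := by
        rw [hK, hfin]; field_simp
    _ = 2 * Real.log ((u + v) / 2) := by
        rw [Real.log_pow]; push_cast; ring
end

section
/- Let 0 < a < b, m = (a+b)/2, and suppose y ≤ a. Then ∫_a^b (m−x)·log|y−x|/(π·√((b−x)(x−a))) dx = √(a−y)·√(b−y) + y − m. In particular, taking y = 0 gives the value √(ab) − m. -/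
open Real Set MeasureTheory intervalIntegral

noncomputable def Gaux (c A θ : ℝ) : ℝ :=
  c / π * (Real.cos θ * (Real.log (A + c * Real.sin θ) - 1)) - A / π * θ
    + 2 * Real.sqrt (A ^ 2 - c ^ 2) / π *
        Real.arctan ((A * Real.tan (θ / 2) + c) / Real.sqrt (A ^ 2 - c ^ 2))

lemma u_pos {c A : ℝ} (hc : 0 < c) (hA : c ≤ A) {θ : ℝ} (hs : -1 < Real.sin θ) :
    0 < A + c * Real.sin θ := by
  nlinarith [Real.sin_le_one θ]

lemma Gaux_deriv {c A : ℝ} (hc : 0 < c) (hA : c ≤ A) {θ : ℝ}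
    (hθ : θ ∈ Ioo (-(π/2)) (π/2)) :
    HasDerivAt (Gaux c A) (-(c/π) * (Real.sin θ * Real.log (A + c * Real.sin θ))) θ := by
  have hπ : (0:ℝ) < π := Real.pi_pos
  have hcosθ : 0 < Real.cos θ := Real.cos_pos_of_mem_Ioo hθ
  have hs : -1 < Real.sin θ := by
    nlinarith [Real.sin_sq_add_cos_sq θ, Real.neg_one_le_sin θ]
  have hu : 0 < A + c * Real.sin θ := u_pos hc hA hs
  have hA0 : 0 < A := lt_of_lt_of_le hc hA
  have hcos2 : 0 < Real.cos (θ / 2) := by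
    apply Real.cos_pos_of_mem_Ioo
    constructor <;> [linarith [hθ.1]; linarith [hθ.2]]
  have hcos2' : Real.cos (θ / 2) ≠ 0 := ne_of_gt hcos2
  set r : ℝ := Real.sqrt (A ^ 2 - c ^ 2) with hr
  have hr2 : r ^ 2 = A ^ 2 - c ^ 2 := Real.sq_sqrt (by nlinarith)
  have hlog : HasDerivAt (fun θ => Real.log (A + c * Real.sin θ))
      ((c * Real.cos θ) / (A + c * Real.sin θ)) θ := by
    have h1 : HasDerivAt (fun θ => A + c * Real.sin θ) (c * Real.cos θ) θ :=
      ((Real.hasDerivAt_sin θ).const_mul c).const_add A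
    exact h1.log (ne_of_gt hu)
  have h2 : HasDerivAt (fun θ => Real.cos θ * (Real.log (A + c * Real.sin θ) - 1))
      ((-Real.sin θ) * (Real.log (A + c * Real.sin θ) - 1)
        + Real.cos θ * ((c * Real.cos θ) / (A + c * Real.sin θ))) θ :=
    (Real.hasDerivAt_cos θ).mul (hlog.sub_const 1)
  have h3 : HasDerivAt (fun θ => c / π * (Real.cos θ * (Real.log (A + c * Real.sin θ) - 1)))
      (c / π * ((-Real.sin θ) * (Real.log (A + c * Real.sin θ) - 1)
        + Real.cos θ * ((c * Real.cos θ) / (A + c * Real.sin θ)))) θ := h2.const_mul _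
  have h4 : HasDerivAt (fun θ : ℝ => A / π * θ) (A / π) θ := by
    simpa using (hasDerivAt_id θ).const_mul (A / π)
  have h5 : HasDerivAt (fun θ => 2 * r / π *
      Real.arctan ((A * Real.tan (θ / 2) + c) / r)) (r ^ 2 / (π * (A + c * Real.sin θ))) θ := by
    rcases eq_or_lt_of_le (Real.sqrt_nonneg (A ^ 2 - c ^ 2)) with h0 | h0
    · have hrz : r = 0 := by rw [hr, ← h0]
      have : (fun θ : ℝ => 2 * r / π * Real.arctan ((A * Real.tan (θ / 2) + c) / r))
          = fun _ => 0 := by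
        funext x; rw [hrz]; ring
      rw [this, hrz]
      simpa using hasDerivAt_const θ (0:ℝ)
    · rw [← hr] at h0
      have htan : HasDerivAt (fun θ => Real.tan (θ / 2)) (1 / Real.cos (θ/2) ^ 2 * (1/2)) θ := by
        have := (Real.hasDerivAt_tan hcos2').comp θ ((hasDerivAt_id θ).div_const 2)
        simpa [Function.comp_def] using this
      have hw : HasDerivAt (fun θ => (A * Real.tan (θ / 2) + c) / r)
          ((A * (1 / Real.cos (θ/2) ^ 2 * (1/2))) / r) θ :=
        ((htan.const_mul A).add_const c).div_const r
      have harc := ((Real.hasDerivAt_arctan ((A * Real.tan (θ / 2) + c) / r)).comp θ hw).const_mul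
        (2 * r / π)
      refine HasDerivAt.congr_deriv harc (Eq.symm ?_)
      have hkey : Real.cos (θ/2) ^ 2 * (r ^ 2 + (A * Real.tan (θ/2) + c) ^ 2)
          = A * (A + c * Real.sin θ) := by
        have hsin : Real.sin θ = 2 * Real.sin (θ/2) * Real.cos (θ/2) := by
          rw [← Real.sin_two_mul]; ring_nf
        have hpyth : Real.sin (θ/2) ^ 2 + Real.cos (θ/2) ^ 2 = 1 := Real.sin_sq_add_cos_sq _
        rw [hr2, Real.tan_eq_sin_div_cos, hsin]
        field_simp
        linear_combination A^2 * hpyth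
      have e1 : 1 + ((A * Real.tan (θ/2) + c) / r) ^ 2
          = (A * (A + c * Real.sin θ)) / (r ^ 2 * Real.cos (θ/2) ^ 2) := by
        rw [div_pow, ← hkey]
        field_simp
      show _ = 2 * r / π * (_ * _)
      rw [e1]
      field_simp
  have hsum := (h3.sub h4).add h5
  have heq : c / π * ((-Real.sin θ) * (Real.log (A + c * Real.sin θ) - 1)
        + Real.cos θ * ((c * Real.cos θ) / (A + c * Real.sin θ))) - A / π
        + r ^ 2 / (π * (A + c * Real.sin θ))
      = -(c/π) * (Real.sin θ * Real.log (A + c * Real.sin θ)) := by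
    have hpyth : Real.sin θ ^ 2 + Real.cos θ ^ 2 = 1 := Real.sin_sq_add_cos_sq θ
    rw [hr2]
    field_simp
    linear_combination c^2 * hpyth
  rw [heq] at hsum
  exact hsum

lemma sqrt_mul_log_cont : Continuous (fun v : ℝ => Real.sqrt v * Real.log v) := by
  have h : (fun v : ℝ => Real.sqrt v * Real.log v)
      = fun v => 2 * (Real.sqrt v * Real.log (Real.sqrt v)) := by
    funext v
    rcases le_or_gt v 0 with hv | hv
    · rw [Real.sqrt_eq_zero'.mpr hv]; ring
    · rw [Real.log_sqrt hv.le]; ring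
  rw [h]
  exact (continuous_const.mul (Real.continuous_mul_log.comp Real.continuous_sqrt))

lemma coslog_cont {c A : ℝ} (hc : 0 < c) (hA : c ≤ A) :
    ContinuousOn (fun θ => Real.cos θ * Real.log (A + c * Real.sin θ))
      (Icc (-(π/2)) (π/2)) := by
  rcases eq_or_lt_of_le hA with rfl | hlt
  · have key : EqOn (fun θ => Real.cos θ * Real.log (c + c * Real.sin θ))
        (fun θ => Real.cos θ * Real.log c
          + Real.sqrt (1 - Real.sin θ) * (Real.sqrt (1 + Real.sin θ) * Real.log (1 + Real.sin θ)))
        (Icc (-(π/2)) (π/2)) := by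
      intro θ hθ
      have hcos : 0 ≤ Real.cos θ := Real.cos_nonneg_of_mem_Icc (by simpa using hθ)
      have hs1 : -1 ≤ Real.sin θ := Real.neg_one_le_sin θ
      have hs2 : Real.sin θ ≤ 1 := Real.sin_le_one θ
      have hfac : Real.cos θ = Real.sqrt (1 - Real.sin θ) * Real.sqrt (1 + Real.sin θ) := by
        rw [← Real.sqrt_mul (by linarith) _]
        rw [show (1 - Real.sin θ) * (1 + Real.sin θ) = Real.cos θ ^ 2 by
          nlinarith [Real.sin_sq_add_cos_sq θ]]
        exact (Real.sqrt_sq hcos).symm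
      rcases eq_or_lt_of_le hs1 with hs | hs
      · have hcz : Real.cos θ = 0 := by
          rw [hfac, ← hs]; simp
        simp only [hcz, ← hs]
        norm_num
      · have h1s : 0 < 1 + Real.sin θ := by linarith
        have hcc : c + c * Real.sin θ = c * (1 + Real.sin θ) := by ring
        simp only [hcc, Real.log_mul (ne_of_gt hc) (ne_of_gt h1s)]
        rw [hfac]
        ring
    apply ContinuousOn.congr _ key
    apply Continuous.continuousOn
    apply ((Real.continuous_cos.mul continuous_const).add _)
    exact (Real.continuous_sqrt.comp (by continuity)).mul
      (sqrt_mul_log_cont.comp (by continuity))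
  · exact Real.continuous_cos.continuousOn.mul
      (((by continuity : Continuous fun θ => A + c * Real.sin θ)).continuousOn.log
        (fun θ _ => by nlinarith [Real.neg_one_le_sin θ]))

lemma Gaux_cont {c A : ℝ} (hc : 0 < c) (hA : c ≤ A) :
    ContinuousOn (Gaux c A) (Icc (-(π/2)) (π/2)) := by
  have htan : ContinuousOn (fun θ : ℝ => Real.tan (θ / 2)) (Icc (-(π/2)) (π/2)) := by
    apply Real.continuousOn_tan.comp (continuous_id.div_const 2).continuousOn
    intro θ hθ
    have hπ := Real.pi_pos
    show Real.cos (θ / 2) ≠ 0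
    refine ne_of_gt (Real.cos_pos_of_mem_Ioo ⟨?_, ?_⟩)
    · linarith [hθ.1]
    · linarith [hθ.2]
  have h1 : ContinuousOn (fun θ => c / π * (Real.cos θ * (Real.log (A + c * Real.sin θ) - 1)))
      (Icc (-(π/2)) (π/2)) := by
    have heq : (fun θ => c / π * (Real.cos θ * (Real.log (A + c * Real.sin θ) - 1)))
        = fun θ => c / π * (Real.cos θ * Real.log (A + c * Real.sin θ) - Real.cos θ) := by
      funext θ; ring
    rw [heq]
    exact continuousOn_const.mul ((coslog_cont hc hA).sub Real.continuous_cos.continuousOn)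
  have h2 : ContinuousOn (fun θ : ℝ => A / π * θ) (Icc (-(π/2)) (π/2)) :=
    (continuous_const.mul continuous_id).continuousOn
  have h3 : ContinuousOn (fun θ => 2 * Real.sqrt (A ^ 2 - c ^ 2) / π *
      Real.arctan ((A * Real.tan (θ / 2) + c) / Real.sqrt (A ^ 2 - c ^ 2)))
      (Icc (-(π/2)) (π/2)) :=
    continuousOn_const.mul (Real.continuous_arctan.comp_continuousOn
      (((htan.const_smul A).add continuousOn_const).div_const _))
  exact (h1.sub h2).add h3

lemma abs_log_le {t : ℝ} (ht : 0 < t) : |Real.log t| ≤ t + 2 * t ^ (-(1/2) : ℝ) := by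
  have hrp : (0:ℝ) ≤ t ^ (-(1/2) : ℝ) := Real.rpow_nonneg ht.le _
  rcases le_or_gt 1 t with h1 | h1
  · have hl : 0 ≤ Real.log t := Real.log_nonneg h1
    rw [abs_of_nonneg hl]
    have := Real.log_le_sub_one_of_pos ht
    linarith
  · have hl : Real.log t ≤ 0 := Real.log_nonpos ht.le h1.le
    rw [abs_of_nonpos hl]
    set s : ℝ := t ^ (-(1/2) : ℝ) with hs
    have hspos : 0 < s := Real.rpow_pos_of_pos ht _
    have hlogs : Real.log s = -(1/2) * Real.log t := Real.log_rpow ht _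
    have := Real.log_le_sub_one_of_pos hspos
    nlinarith

lemma integrable_h {c A : ℝ} (hc : 0 < c) (hA : c ≤ A) :
    IntervalIntegrable (fun θ => -(c/π) * (Real.sin θ * Real.log (A + c * Real.sin θ)))
      volume (-(π/2)) (π/2) := by
  have hπ : (0:ℝ) < π := Real.pi_pos
  set K : ℝ := |Real.log (A + c)| + |Real.log (2 * c / π ^ 2)| with hK
  have hKnn : 0 ≤ K := by positivity
  -- the dominating function
  set g : ℝ → ℝ := fun θ => c / π * (K + 2 * ((θ + π/2) + 2 * (θ + π/2) ^ (-(1/2) : ℝ))) with hg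
  have hgint : IntervalIntegrable g volume (-(π/2)) (π/2) := by
    apply IntervalIntegrable.const_mul
    apply IntervalIntegrable.add intervalIntegrable_const
    apply IntervalIntegrable.const_mul
    apply IntervalIntegrable.add
    · exact (continuous_id.add continuous_const).intervalIntegrable _ _
    · apply IntervalIntegrable.const_mul
      have h0 : IntervalIntegrable (fun x : ℝ => x ^ (-(1/2):ℝ)) volume 0 π :=
        intervalIntegrable_rpow' (by norm_num)
      have := h0.comp_add_right (π/2)
      rw [show (0:ℝ) - π/2 = -(π/2) by ring, show π - π/2 = π/2 by ring] at this
      exact this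
  apply hgint.mono_fun'
  · apply Measurable.aestronglyMeasurable
    exact (measurable_const.mul (Real.measurable_sin.mul
      (Real.measurable_log.comp (measurable_const.add (Real.measurable_sin.const_mul c)))))
  · rw [Filter.EventuallyLE, ae_restrict_iff' measurableSet_uIoc]
    apply ae_of_all
    intro θ hθ
    have hθ' : θ ∈ Ioc (-(π/2)) (π/2) := by
      rwa [uIoc_of_le (by linarith)] at hθ
    set t : ℝ := θ + π/2 with htdef
    clear_value t
    have ht0 : 0 < t := by have := hθ'.1; simp only [htdef]; linarith
    have htπ : t ≤ π := by have := hθ'.2; simp only [htdef]; linarith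
    have hsinθ : Real.sin θ = -Real.cos t := by
      rw [show θ = t - π/2 by simp [htdef]]
      exact Real.sin_sub_pi_div_two t
    have hsinhalf : 2/π * (t/2) ≤ Real.sin (t/2) :=
      Real.mul_le_sin (by linarith) (by linarith)
    have hcoshalf : Real.sin (t/2) ^ 2 = 1/2 - Real.cos t / 2 := by
      have := Real.sin_sq_eq_half_sub (t/2)
      rwa [show 2 * (t/2) = t by ring] at this
    have hsge : t/π ≤ Real.sin (t/2) := by
      have h : 2/π * (t/2) = t/π := by ring
      linarith [hsinhalf]
    have hsq : (t/π)^2 ≤ Real.sin (t/2)^2 :=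
      pow_le_pow_left₀ (by positivity) hsge 2
    rw [div_pow] at hsq
    have hsq2 := mul_le_mul_of_nonneg_left hsq (by positivity : (0:ℝ) ≤ 2*c)
    have h3 : 2*c*Real.sin (t/2)^2 = c - c * Real.cos t := by
      linear_combination 2*c*hcoshalf
    have hlow : 2*c/π^2 * t^2 ≤ A + c * Real.sin θ := by
      rw [hsinθ, show 2*c/π^2*t^2 = 2*c*(t^2/π^2) by ring]
      linarith [hsq2, h3, hA]
    have hu0 : 0 < A + c * Real.sin θ := lt_of_lt_of_le (by positivity) hlow
    have hup : A + c * Real.sin θ ≤ A + c := by nlinarith [Real.sin_le_one θ]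
    have hlb : Real.log (2*c/π^2) + 2 * Real.log t ≤ Real.log (A + c * Real.sin θ) := by
      have h := Real.log_le_log (by positivity) hlow
      rw [Real.log_mul (by positivity) (by positivity), Real.log_pow] at h
      push_cast at h
      linarith
    have hub : Real.log (A + c * Real.sin θ) ≤ Real.log (A + c) := Real.log_le_log hu0 hup
    have habs : |Real.log (A + c * Real.sin θ)| ≤ K + 2 * |Real.log t| := by
      rw [abs_le]
      constructor
      · have n1 := neg_abs_le (Real.log (2*c/π^2))
        have n2 := neg_abs_le (Real.log t)
        have n0 := abs_nonneg (Real.log (A+c))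
        simp only [hK]; linarith
      · have n1 := le_abs_self (Real.log (A+c))
        have n2 := abs_nonneg (Real.log t)
        have n0 := abs_nonneg (Real.log (2*c/π^2))
        simp only [hK]; linarith
    have hcπ : 0 < c / π := by positivity
    have h1 : |Real.sin θ| ≤ 1 := Real.abs_sin_le_one θ
    have hlt := abs_log_le ht0
    show ‖-(c/π) * (Real.sin θ * Real.log (A + c * Real.sin θ))‖ ≤ g θ
    rw [Real.norm_eq_abs, abs_mul, abs_neg, abs_of_pos hcπ, abs_mul]
    simp only [hg]
    apply mul_le_mul_of_nonneg_left _ hcπ.le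
    have hlogu := abs_nonneg (Real.log (A + c * Real.sin θ))
    rw [← htdef]
    calc |Real.sin θ| * |Real.log (A + c * Real.sin θ)|
        ≤ 1 * |Real.log (A + c * Real.sin θ)| := mul_le_mul_of_nonneg_right h1 hlogu
      _ = |Real.log (A + c * Real.sin θ)| := one_mul _
      _ ≤ K + 2 * |Real.log t| := habs
      _ ≤ K + 2 * (t + 2 * t ^ (-(1/2) : ℝ)) := by linarith [hlt]

lemma ftc_eval {c A : ℝ} (hc : 0 < c) (hA : c ≤ A) :
    ∫ θ in (-(π/2))..(π/2), -(c/π) * (Real.sin θ * Real.log (A + c * Real.sin θ))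
      = Real.sqrt (A^2 - c^2) - A := by
  have hπ := Real.pi_pos
  rw [intervalIntegral.integral_eq_sub_of_hasDeriv_right_of_le (by linarith)
    (Gaux_cont hc hA) (fun θ hθ => (Gaux_deriv hc hA hθ).hasDerivWithinAt)
    (integrable_h hc hA)]
  set r : ℝ := Real.sqrt (A^2 - c^2) with hr
  have e1 : Gaux c A (π/2) = -A/2 + 2*r/π * Real.arctan ((A + c)/r) := by
    unfold Gaux
    rw [show (π/2)/2 = π/4 by ring, Real.tan_pi_div_four, Real.cos_pi_div_two]
    field_simp
    all_goals ring
  have e2 : Gaux c A (-(π/2)) = A/2 - 2*r/π * Real.arctan ((A - c)/r) := by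
    unfold Gaux
    rw [show (-(π/2))/2 = -(π/4) by ring, Real.tan_neg, Real.tan_pi_div_four, Real.cos_neg,
      Real.cos_pi_div_two, show (A * -1 + c)/r = -((A - c)/r) by ring, Real.arctan_neg]
    field_simp
    all_goals ring
  rw [e1, e2]
  rcases eq_or_lt_of_le hA with rfl | hlt
  · have hr0 : r = 0 := by rw [hr]; simp
    rw [hr0]
    simp
    ring_nf
  · have hr2 : r^2 = A^2 - c^2 := Real.sq_sqrt (by nlinarith)
    have hr0 : 0 < r := Real.sqrt_pos.mpr (by nlinarith)
    have hinv : (A - c)/r = ((A + c)/r)⁻¹ := by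
      rw [inv_div, div_eq_div_iff hr0.ne' (ne_of_gt (by linarith : (0:ℝ) < A + c))]
      linear_combination -hr2
    rw [hinv, Real.arctan_inv_of_pos (div_pos (by linarith) hr0)]
    field_simp
    ring

theorem stmt_12 (a b m y : ℝ) (ha : 0 < a) (hab : a < b) (hm : m = (a + b) / 2)
    (hy : y ≤ a) :
    ∫ x in a..b, (m - x) * Real.log |y - x| / (Real.pi * Real.sqrt ((b - x) * (x - a)))
      = Real.sqrt (a - y) * Real.sqrt (b - y) + y - m := by
  have hπ := Real.pi_pos
  set c : ℝ := (b - a) / 2 with hcdef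
  set A : ℝ := m - y with hAdef
  have hc : 0 < c := by rw [hcdef]; linarith
  have hA : c ≤ A := by rw [hcdef, hAdef, hm]; linarith
  -- image of the substitution
  have himg : (fun θ : ℝ => m + c * Real.sin θ) '' Ioo (-(π/2)) (π/2) = Ioo a b := by
    ext x
    constructor
    · rintro ⟨θ, hθ, rfl⟩
      have hcos := Real.cos_pos_of_mem_Ioo hθ
      have hpyth := Real.sin_sq_add_cos_sq θ
      have hs1 : -1 < Real.sin θ := by nlinarith [Real.neg_one_le_sin θ]
      have hs2 : Real.sin θ < 1 := by nlinarith [Real.sin_le_one θ]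
      constructor
      · rw [hm, hcdef]; nlinarith
      · rw [hm, hcdef]; nlinarith
    · intro hx
      have h1 : -1 < (x - m) / c := by
        rw [lt_div_iff₀ hc, hm, hcdef]; have := hx.1; nlinarith
      have h2 : (x - m) / c < 1 := by
        rw [div_lt_iff₀ hc, hm, hcdef]; have := hx.2; nlinarith
      refine ⟨Real.arcsin ((x - m) / c), ⟨?_, ?_⟩, ?_⟩
      · exact Real.neg_pi_div_two_lt_arcsin.mpr h1
      · exact Real.arcsin_lt_pi_div_two.mpr h2
      · show m + c * Real.sin (Real.arcsin ((x - m) / c)) = x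
        rw [Real.sin_arcsin h1.le h2.le]; field_simp; ring
  have hderiv : ∀ θ ∈ Ioo (-(π/2)) (π/2),
      HasDerivWithinAt (fun θ : ℝ => m + c * Real.sin θ) (c * Real.cos θ)
        (Ioo (-(π/2)) (π/2)) θ :=
    fun θ _ => (((Real.hasDerivAt_sin θ).const_mul c).const_add m).hasDerivWithinAt
  have hinj : InjOn (fun θ : ℝ => m + c * Real.sin θ) (Ioo (-(π/2)) (π/2)) := by
    intro θ1 h1 θ2 h2 heq
    simp only at heq
    have hss : Real.sin θ1 = Real.sin θ2 :=
      mul_left_cancel₀ (ne_of_gt hc) (by linarith)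
    exact Real.injOn_sin (Ioo_subset_Icc_self h1) (Ioo_subset_Icc_self h2) hss
  rw [intervalIntegral.integral_of_le hab.le, MeasureTheory.integral_Ioc_eq_integral_Ioo,
    ← himg, MeasureTheory.integral_image_eq_integral_abs_deriv_smul measurableSet_Ioo hderiv hinj]
  have hpt : EqOn
      (fun θ => |c * Real.cos θ| • ((m - (m + c * Real.sin θ)) *
        Real.log |y - (m + c * Real.sin θ)| /
        (π * Real.sqrt ((b - (m + c * Real.sin θ)) * ((m + c * Real.sin θ) - a)))))
      (fun θ => -(c/π) * (Real.sin θ * Real.log (A + c * Real.sin θ)))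
      (Ioo (-(π/2)) (π/2)) := by
    intro θ hθ
    have hcos := Real.cos_pos_of_mem_Ioo hθ
    have hpyth := Real.sin_sq_add_cos_sq θ
    have hs1 : -1 < Real.sin θ := by nlinarith [Real.neg_one_le_sin θ]
    have hu : 0 < A + c * Real.sin θ := u_pos hc hA hs1
    have hsq : (b - (m + c * Real.sin θ)) * ((m + c * Real.sin θ) - a)
        = (c * Real.cos θ)^2 := by
      rw [hm, hcdef]; linear_combination (-(((b - a)/2)^2)) * hpyth
    have hsqrt : Real.sqrt ((b - (m + c * Real.sin θ)) * ((m + c * Real.sin θ) - a))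
        = c * Real.cos θ := by
      rw [hsq, Real.sqrt_sq (by positivity)]
    have habs : |y - (m + c * Real.sin θ)| = A + c * Real.sin θ := by
      rw [show y - (m + c * Real.sin θ) = -(A + c * Real.sin θ) by rw [hAdef]; ring,
        abs_neg, abs_of_pos hu]
    simp only [hsqrt, habs, smul_eq_mul]
    rw [abs_of_pos (by positivity)]
    field_simp
    ring
  rw [MeasureTheory.setIntegral_congr_fun measurableSet_Ioo hpt,
    ← MeasureTheory.integral_Ioc_eq_integral_Ioo,
    ← intervalIntegral.integral_of_le (by linarith : -(π/2) ≤ π/2),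
    ftc_eval hc hA]
  have hfac : A^2 - c^2 = (a - y) * (b - y) := by rw [hAdef, hcdef, hm]; ring
  rw [hfac, Real.sqrt_mul (by linarith) _, hAdef]
  ring
end

section
/- Let 0 < a < b. Then ∫_a^b log(x)·√(ab)/(π·x·√((b−x)(x−a))) dx = log(4ab/(a+b+2√(ab))). -/
open MeasureTheory intervalIntegral Real Set

lemma meanvalue (U V : ℝ) (hV : 0 ≤ V) (hUV : V < U) :
    ∫ θ in (0:ℝ)..(2*Real.pi),
      Real.log ‖((U:ℂ) + (V:ℂ) * Complex.I * Complex.exp ((θ:ℂ) * Complex.I))‖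
      = 2 * Real.pi * Real.log U := by
  have hU : 0 < U := lt_of_le_of_lt hV hUV
  set w : ℂ := (V:ℂ) * Complex.I with hw
  have habsw : ‖w‖ = V := by
    simp [hw, abs_of_nonneg hV]
  set f : ℂ → ℂ := fun z => Complex.log ((U:ℂ) + w * z) with hf
  have hre : ∀ z : ℂ, ‖z‖ ≤ 1 → 0 < ((U:ℂ) + w * z).re := by
    intro z hz
    have h1 : |((w * z).re)| ≤ V := by
      calc |((w * z).re)| ≤ ‖w * z‖ := Complex.abs_re_le_norm _
        _ = V * ‖z‖ := by rw [norm_mul, habsw]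
        _ ≤ V * 1 := by nlinarith [norm_nonneg z]
        _ = V := mul_one V
    have : ((U:ℂ) + w * z).re = U + (w * z).re := by simp
    rw [this]
    nlinarith [abs_le.mp h1]
  have hslit : ∀ z : ℂ, ‖z‖ ≤ 1 → ((U:ℂ) + w * z) ∈ Complex.slitPlane :=
    fun z hz => Or.inl (hre z hz)
  have hdiff : DifferentiableOn ℂ f (Metric.closedBall 0 1) := by
    intro z hz
    have hz' : ‖z‖ ≤ 1 := by
      simpa [Complex.dist_eq] using Metric.mem_closedBall.mp hz
    exact ((Complex.differentiableAt_log (hslit z hz')).comp z (f := fun z : ℂ => (U:ℂ) + w * z)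
      (by fun_prop)).differentiableWithinAt
  have key := (hdiff.diffContOnCl_ball (by simp)).circleIntegral_sub_inv_smul
      (w := 0) (Metric.mem_ball_self one_pos)
  have hne : ∀ θ : ℝ, circleMap 0 1 θ ≠ 0 := fun θ => circleMap_ne_center one_ne_zero
  have habs1 : ∀ θ : ℝ, ‖circleMap 0 1 θ‖ = 1 := by
    intro θ; simp [circleMap]
  rw [circleIntegral] at key
  simp only [deriv_circleMap, sub_zero, smul_eq_mul] at key
  have heq : ∀ θ : ℝ, circleMap 0 1 θ * Complex.I * ((circleMap 0 1 θ)⁻¹ * f (circleMap 0 1 θ))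
      = Complex.I * f (circleMap 0 1 θ) := by
    intro θ
    field_simp [hne θ]
  rw [intervalIntegral.integral_congr (fun θ _ => heq θ), intervalIntegral.integral_const_mul]
    at key
  have key2 : ∫ θ in (0:ℝ)..2*Real.pi, f (circleMap 0 1 θ) = (2*Real.pi : ℂ) * f 0 := by
    apply mul_left_cancel₀ Complex.I_ne_zero
    rw [key]; ring
  have hcont : Continuous fun θ : ℝ => f (circleMap 0 1 θ) := by
    rw [continuous_iff_continuousAt]
    intro θ
    show ContinuousAt (Complex.log ∘ fun θ : ℝ => (U:ℂ) + w * circleMap 0 1 θ) θ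
    exact ContinuousAt.comp (continuousAt_clog (hslit _ (le_of_eq (habs1 θ))))
      (by fun_prop)
  have hInt : IntervalIntegrable (fun θ : ℝ => f (circleMap 0 1 θ)) volume 0 (2*Real.pi) :=
    hcont.intervalIntegrable _ _
  have key3 := Complex.reCLM.intervalIntegral_comp_comm hInt
  rw [key2] at key3
  have hre2 : ∀ θ : ℝ, Complex.reCLM (f (circleMap 0 1 θ))
      = Real.log ‖((U:ℂ) + (V:ℂ) * Complex.I * Complex.exp ((θ:ℂ) * Complex.I))‖ := by
    intro θ
    simp only [Complex.reCLM_apply, hf, Complex.log_re, circleMap, Complex.ofReal_zero, zero_add,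
      Complex.ofReal_one, one_mul, hw, mul_assoc]
  rw [intervalIntegral.integral_congr (fun θ _ => hre2 θ)] at key3
  rw [key3]
  have hf0 : f 0 = Complex.log (U:ℂ) := by simp [hf]
  rw [hf0]
  have : ((2*Real.pi : ℂ) * Complex.log (U:ℂ)).re = 2*Real.pi * (Complex.log (U:ℂ)).re := by
    rw [show (2*Real.pi : ℂ) = ((2*Real.pi : ℝ) : ℂ) by push_cast; ring, Complex.re_ofReal_mul]
  rw [Complex.reCLM_apply, this, Complex.log_re, Complex.norm_real, Real.norm_eq_abs, abs_of_pos hU]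

lemma fullcircle (a b : ℝ) (ha : 0 < a) (hab : a < b) :
    ∫ θ in (0:ℝ)..(2*Real.pi), Real.log ((a+b) - (b-a) * Real.sin θ)
      = 2 * Real.pi * Real.log ((a + b + 2 * Real.sqrt (a*b))/2) := by
  set U : ℝ := (Real.sqrt (2*b) + Real.sqrt (2*a))/2 with hU
  set V : ℝ := (Real.sqrt (2*b) - Real.sqrt (2*a))/2 with hV
  have h2a : (0:ℝ) < 2*a := by linarith
  have h2b : (0:ℝ) < 2*b := by linarith
  have p2a : Real.sqrt (2*a) = Real.sqrt 2 * Real.sqrt a := Real.sqrt_mul (by norm_num) a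
  have p2b : Real.sqrt (2*b) = Real.sqrt 2 * Real.sqrt b := Real.sqrt_mul (by norm_num) b
  have pab : Real.sqrt (a*b) = Real.sqrt a * Real.sqrt b := Real.sqrt_mul ha.le b
  have e : (Real.sqrt 2)^2 = 2 := Real.sq_sqrt (by norm_num)
  have qa : (Real.sqrt a)^2 = a := Real.sq_sqrt ha.le
  have qb : (Real.sqrt b)^2 = b := Real.sq_sqrt (le_of_lt (lt_trans ha hab))
  have hlt : Real.sqrt (2*a) < Real.sqrt (2*b) := by
    apply Real.sqrt_lt_sqrt h2a.le; linarith
  have hV0 : 0 ≤ V := by rw [hV]; linarith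
  have hUV : V < U := by
    rw [hU, hV]
    have : 0 < Real.sqrt (2*a) := Real.sqrt_pos.mpr h2a
    linarith
  have hU2 : U^2 = (a + b + 2*Real.sqrt (a*b))/2 := by
    rw [hU, p2a, p2b, pab]
    linear_combination ((Real.sqrt b + Real.sqrt a)^2/4)*e + (1/2)*qb + (1/2)*qa
  have hUVsum : U^2 + V^2 = a + b := by
    rw [hU, hV, p2a, p2b]
    linear_combination ((Real.sqrt b + Real.sqrt a)^2/4 + (Real.sqrt b - Real.sqrt a)^2/4)*e
      + qb + qa
  have hUVprod : 2*(U*V) = b - a := by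
    rw [hU, hV, p2a, p2b]
    linear_combination (((Real.sqrt b)^2 - (Real.sqrt a)^2)/2)*e + qb - qa
  have hpt : ∀ θ : ℝ, Real.log ((a+b) - (b-a) * Real.sin θ)
      = 2 * Real.log ‖((U:ℂ) + (V:ℂ) * Complex.I * Complex.exp ((θ:ℂ) * Complex.I))‖ := by
    intro θ
    have habs2 : ‖((U:ℂ) + (V:ℂ) * Complex.I * Complex.exp ((θ:ℂ) * Complex.I))‖^2
        = (a+b) - (b-a) * Real.sin θ := by
      rw [Complex.sq_norm, Complex.normSq_apply]
      have hz : ((U:ℂ) + (V:ℂ) * Complex.I * Complex.exp ((θ:ℂ) * Complex.I))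
          = Complex.mk (U - V * Real.sin θ) (V * Real.cos θ) := by
        rw [Complex.exp_mul_I]
        apply Complex.ext <;>
          simp [Complex.cos_ofReal_re, Complex.sin_ofReal_re] <;> ring
      rw [hz]
      simp only []
      have hsc := Real.sin_sq_add_cos_sq θ
      linear_combination hUVsum - Real.sin θ * hUVprod + V^2 * hsc
    rw [← habs2, Real.log_pow]
    push_cast
    ring
  rw [intervalIntegral.integral_congr (fun θ _ => hpt θ), intervalIntegral.integral_const_mul,
    meanvalue U V hV0 hUV, ← hU2, Real.log_pow]
  push_cast
  ring

lemma halfcircle (a b : ℝ) (ha : 0 < a) (hab : a < b) :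
    ∫ θ in (-(Real.pi/2))..(Real.pi/2), Real.log ((a+b) - (b-a) * Real.sin θ)
      = Real.pi * Real.log ((a + b + 2 * Real.sqrt (a*b))/2) := by
  set h : ℝ → ℝ := fun θ => Real.log ((a+b) - (b-a) * Real.sin θ) with hh
  have hpos : ∀ θ : ℝ, 0 < (a+b) - (b-a) * Real.sin θ := by
    intro θ
    have h1 : (b-a) * Real.sin θ ≤ (b-a) * 1 :=
      mul_le_mul_of_nonneg_left (Real.sin_le_one θ) (by linarith)
    linarith
  have hcont : Continuous h := by
    rw [continuous_iff_continuousAt]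
    intro θ
    show ContinuousAt ((fun t => Real.log t) ∘ fun θ : ℝ => (a+b) - (b-a) * Real.sin θ) θ
    exact ContinuousAt.comp (Real.continuousAt_log (hpos θ).ne') (by fun_prop)
  have hper : Function.Periodic h (2*Real.pi) := by
    intro θ; simp only [hh, Real.sin_add_two_pi]
  have hrefl : ∀ θ : ℝ, h (Real.pi - θ) = h θ := by
    intro θ; simp only [hh, Real.sin_pi_sub]
  have h1 : ∫ θ in (Real.pi/2)..(3*(Real.pi/2)), h θ = ∫ θ in (-(Real.pi/2))..(Real.pi/2), h θ := by
    have := intervalIntegral.integral_comp_sub_left h Real.pi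
      (a := -(Real.pi/2)) (b := Real.pi/2)
    rw [intervalIntegral.integral_congr (g := h) (fun θ _ => hrefl θ)] at this
    calc ∫ θ in (Real.pi/2)..(3*(Real.pi/2)), h θ
        = ∫ θ in (Real.pi - Real.pi/2)..(Real.pi - -(Real.pi/2)), h θ := by congr 1 <;> ring
      _ = ∫ θ in (-(Real.pi/2))..(Real.pi/2), h θ := this.symm
  have h2 : ∫ θ in (-(Real.pi/2))..(3*(Real.pi/2)), h θ = ∫ θ in (0:ℝ)..(2*Real.pi), h θ := by
    have := hper.intervalIntegral_add_eq (-(Real.pi/2)) 0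
    rw [zero_add] at this
    rw [show 3*(Real.pi/2) = -(Real.pi/2) + 2*Real.pi by ring]
    exact this
  have h3 : ∫ θ in (-(Real.pi/2))..(3*(Real.pi/2)), h θ
      = (∫ θ in (-(Real.pi/2))..(Real.pi/2), h θ) + ∫ θ in (Real.pi/2)..(3*(Real.pi/2)), h θ :=
    (intervalIntegral.integral_add_adjacent_intervals
      (hcont.intervalIntegrable _ _) (hcont.intervalIntegrable _ _)).symm
  have h4 := fullcircle a b ha hab
  have : 2 * ∫ θ in (-(Real.pi/2))..(Real.pi/2), h θ
      = 2 * Real.pi * Real.log ((a + b + 2 * Real.sqrt (a*b))/2) := by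
    rw [← h4, ← h2, h3, h1]; ring
  linarith

theorem stmt_13 (a b : ℝ) (ha : 0 < a) (hab : a < b) :
    ∫ x in a..b, Real.log x * Real.sqrt (a * b) / (Real.pi * x * Real.sqrt ((b - x) * (x - a)))
      = Real.log (4 * a * b / (a + b + 2 * Real.sqrt (a * b))) := by
  have hb : 0 < b := lt_trans ha hab
  have hd : 0 < b - a := by linarith
  have hpi := Real.pi_pos
  set ψ : ℝ → ℝ := fun θ => 2*a*b/((a+b) - (b-a) * Real.sin θ) with hψ
  set ψ' : ℝ → ℝ := fun θ =>
    (0 * ((a+b) - (b-a) * Real.sin θ) - 2*a*b * (0 - (b-a) * Real.cos θ))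
      / ((a+b) - (b-a) * Real.sin θ)^2 with hψ'
  have hD : ∀ θ : ℝ, 0 < (a+b) - (b-a) * Real.sin θ := by
    intro θ
    have h1 : (b-a) * Real.sin θ ≤ (b-a) * 1 :=
      mul_le_mul_of_nonneg_left (Real.sin_le_one θ) hd.le
    linarith
  have hsinb : ∀ θ ∈ Set.Ioo (-(Real.pi/2)) (Real.pi/2), -1 < Real.sin θ ∧ Real.sin θ < 1 := by
    intro θ hθ
    constructor
    · have := Real.strictMonoOn_sin (⟨le_refl _, by linarith⟩
        : -(Real.pi/2) ∈ Set.Icc (-(Real.pi/2)) (Real.pi/2))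
        (⟨hθ.1.le, hθ.2.le⟩ : θ ∈ Set.Icc (-(Real.pi/2)) (Real.pi/2)) hθ.1
      simpa using this
    · have := Real.strictMonoOn_sin
        (⟨hθ.1.le, hθ.2.le⟩ : θ ∈ Set.Icc (-(Real.pi/2)) (Real.pi/2))
        ((⟨by linarith, le_refl _⟩) : Real.pi/2 ∈ Set.Icc (-(Real.pi/2)) (Real.pi/2)) hθ.2
      simpa using this
  have hDbound : ∀ θ ∈ Set.Ioo (-(Real.pi/2)) (Real.pi/2),
      2*a < (a+b) - (b-a) * Real.sin θ ∧ (a+b) - (b-a) * Real.sin θ < 2*b := by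
    intro θ hθ
    obtain ⟨hs1, hs2⟩ := hsinb θ hθ
    constructor
    · nlinarith
    · nlinarith
  have hderiv : ∀ θ ∈ Set.Ioo (-(Real.pi/2)) (Real.pi/2), HasDerivAt ψ (ψ' θ) θ := by
    intro θ _
    exact (hasDerivAt_const θ (2*a*b)).div
      ((hasDerivAt_const θ (a+b)).sub ((Real.hasDerivAt_sin θ).const_mul (b-a))) (hD θ).ne'
  have hmono : StrictMonoOn ψ (Set.Ioo (-(Real.pi/2)) (Real.pi/2)) := by
    intro θ₁ h₁ θ₂ h₂ hlt
    have hs : Real.sin θ₁ < Real.sin θ₂ :=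
      Real.strictMonoOn_sin ⟨h₁.1.le, h₁.2.le⟩ ⟨h₂.1.le, h₂.2.le⟩ hlt
    have : (a+b) - (b-a) * Real.sin θ₂ < (a+b) - (b-a) * Real.sin θ₁ := by nlinarith
    exact div_lt_div_of_pos_left (by positivity) (hD θ₂) this
  have hva : ψ (-(Real.pi/2)) = a := by
    simp only [hψ, Real.sin_neg, Real.sin_pi_div_two]
    rw [div_eq_iff (by nlinarith : (a+b) - (b-a)*(-1:ℝ) ≠ 0)]
    ring
  have hvb : ψ (Real.pi/2) = b := by
    simp only [hψ, Real.sin_pi_div_two]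
    rw [div_eq_iff (by nlinarith : (a+b) - (b-a)*(1:ℝ) ≠ 0)]
    ring
  have hcontψ : Continuous ψ := by
    apply Continuous.div continuous_const (by fun_prop)
    exact fun θ => (hD θ).ne'
  have himg : ψ '' Set.Ioo (-(Real.pi/2)) (Real.pi/2) = Set.Ioo a b := by
    apply Set.Subset.antisymm
    · rintro x ⟨θ, hθ, rfl⟩
      obtain ⟨hD1, hD2⟩ := hDbound θ hθ
      constructor
      · have := div_lt_div_of_pos_left (by positivity : (0:ℝ) < 2*a*b) (hD θ) hD2
        calc a = 2*a*b/(2*b) := by rw [eq_div_iff (by positivity : (2*b:ℝ) ≠ 0)]; ring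
          _ < ψ θ := this
      · have := div_lt_div_of_pos_left (by positivity : (0:ℝ) < 2*a*b) (by positivity) hD1
        calc ψ θ < 2*a*b/(2*a) := this
          _ = b := by rw [div_eq_iff (by positivity : (2*a:ℝ) ≠ 0)]; ring
    · have := intermediate_value_Ioo (by linarith : -(Real.pi/2) ≤ Real.pi/2)
        hcontψ.continuousOn (a := -(Real.pi/2)) (b := Real.pi/2)
      rw [hva, hvb] at this
      exact this
  have hchange := MeasureTheory.integral_image_eq_integral_abs_deriv_smul
    measurableSet_Ioo (fun θ hθ => (hderiv θ hθ).hasDerivWithinAt) hmono.injOn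
    (fun x => Real.log x * Real.sqrt (a * b) / (Real.pi * x * Real.sqrt ((b - x) * (x - a))))
  rw [himg] at hchange
  have hEq : Set.EqOn
      (fun θ => |ψ' θ| • (Real.log (ψ θ) * Real.sqrt (a * b) /
        (Real.pi * ψ θ * Real.sqrt ((b - ψ θ) * (ψ θ - a)))))
      (fun θ => (1/Real.pi) * Real.log (ψ θ)) (Set.Ioo (-(Real.pi/2)) (Real.pi/2)) := by
    intro θ hθ
    obtain ⟨hs1, hs2⟩ := hsinb θ hθ
    have hcos : 0 < Real.cos θ := Real.cos_pos_of_mem_Ioo hθ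
    have hDθ := hD θ
    set D := (a+b) - (b-a) * Real.sin θ with hDdef
    have hψθ : ψ θ = 2*a*b/D := rfl
    have hψθpos : 0 < ψ θ := by rw [hψθ]; positivity
    have hsab : Real.sqrt (a*b) ^ 2 = a * b := Real.sq_sqrt (by positivity)
    have hsabpos : 0 < Real.sqrt (a*b) := Real.sqrt_pos.mpr (by positivity)
    have hsq : (b - ψ θ) * (ψ θ - a)
        = (Real.sqrt (a*b) * (b-a) * Real.cos θ / D)^2 := by
      have hsc := Real.sin_sq_add_cos_sq θ
      have hc2 : Real.cos θ^2 = 1 - Real.sin θ^2 := by linarith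
      have hDne : D ≠ 0 := hDθ.ne'
      rw [hψθ, div_pow, mul_pow, mul_pow, hsab, hc2, hDdef]
      rw [hDdef] at hDne
      field_simp
      ring
    have hsqrt : Real.sqrt ((b - ψ θ) * (ψ θ - a))
        = Real.sqrt (a*b) * (b-a) * Real.cos θ / D := by
      rw [hsq, Real.sqrt_sq (by positivity)]
    simp only [smul_eq_mul]
    rw [hsqrt]
    have hψ'val : ψ' θ = (2*a*b*((b-a) * Real.cos θ)) / D^2 := by
      show (0 * D - 2*a*b * (0 - (b-a) * Real.cos θ)) / D^2 = _
      ring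
    have habs : |ψ' θ| = (2*a*b*((b-a) * Real.cos θ)) / D^2 := by
      rw [hψ'val, abs_of_nonneg (by positivity)]
    have alg : ∀ (D L c S : ℝ), 0 < D → 0 < c → 0 < S →
        (2*a*b*((b-a)*c)/D^2) * (L * S / (Real.pi * (2*a*b/D) * (S*(b-a)*c/D)))
          = (1/Real.pi)*L := by
      intro D L c S hD hc hS
      field_simp
    rw [habs, hψθ]
    exact alg D (Real.log (2*a*b/D)) (Real.cos θ) (Real.sqrt (a*b)) hDθ hcos hsabpos
  rw [MeasureTheory.setIntegral_congr_fun measurableSet_Ioo hEq] at hchange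
  have step1 : ∫ x in a..b, Real.log x * Real.sqrt (a * b) /
      (Real.pi * x * Real.sqrt ((b - x) * (x - a)))
      = ∫ θ in (-(Real.pi/2))..(Real.pi/2), (1/Real.pi) * Real.log (ψ θ) := by
    rw [intervalIntegral.integral_of_le hab.le, intervalIntegral.integral_of_le (by linarith),
      MeasureTheory.integral_Ioc_eq_integral_Ioo, MeasureTheory.integral_Ioc_eq_integral_Ioo]
    exact hchange
  rw [step1]
  have hpt2 : ∀ θ : ℝ, (1/Real.pi) * Real.log (ψ θ)
      = (1/Real.pi) * Real.log (2*a*b) - (1/Real.pi) * Real.log ((a+b) - (b-a) * Real.sin θ) := by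
    intro θ
    rw [hψ]
    simp only []
    rw [Real.log_div (by positivity) (hD θ).ne']
    ring
  rw [intervalIntegral.integral_congr (fun θ _ => hpt2 θ)]
  have hcont2 : Continuous fun θ : ℝ => (1/Real.pi) * Real.log ((a+b) - (b-a) * Real.sin θ) := by
    apply Continuous.mul continuous_const
    rw [continuous_iff_continuousAt]
    intro θ
    show ContinuousAt ((fun t => Real.log t) ∘ fun θ : ℝ => (a+b) - (b-a) * Real.sin θ) θ
    exact ContinuousAt.comp (Real.continuousAt_log (hD θ).ne') (by fun_prop)
  rw [intervalIntegral.integral_sub (intervalIntegrable_const) (hcont2.intervalIntegrable _ _),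
    intervalIntegral.integral_const, intervalIntegral.integral_const_mul,
    halfcircle a b ha hab]
  have h2ab : (0:ℝ) < 2*a*b := by positivity
  have hsab : (0:ℝ) < a + b + 2 * Real.sqrt (a*b) := by positivity
  rw [smul_eq_mul]
  have hfrac : 4 * a * b / (a + b + 2 * Real.sqrt (a * b))
      = (2*a*b) / ((a + b + 2 * Real.sqrt (a*b))/2) := by
    rw [div_div_eq_mul_div]
    ring_nf
  rw [hfrac, Real.log_div h2ab.ne' (by positivity)]
  field_simp
  ring
end

section
/- Let 0 < a < b. Then ∫_a^b log(x)/(π·√((b−x)(x−a))) dx = log((a+b+2√(ab))/4). -/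
open Real MeasureTheory intervalIntegral Set Filter

noncomputable def Fr (r : ℝ) : ℝ := ∫ θ in (0:ℝ)..π, Real.log (1 - 2*r*Real.cos θ + r^2)

lemma aux_pos (r θ : ℝ) (hr : |r| < 1) : 0 < 1 - 2*r*Real.cos θ + r^2 := by
  nlinarith [abs_cos_le_one θ, sq_abs r, abs_nonneg r, abs_nonneg (r * Real.cos θ),
    le_abs_self (r * Real.cos θ), abs_mul r (Real.cos θ), sq_nonneg (1 - |r|),
    mul_le_mul_of_nonneg_left (abs_cos_le_one θ) (abs_nonneg r)]

lemma aux_cont (r : ℝ) (hr : |r| < 1) :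
    Continuous (fun θ => Real.log (1 - 2*r*Real.cos θ + r^2)) := by
  apply Continuous.log
  · continuity
  · exact fun θ => (aux_pos r θ hr).ne'

lemma Fr_neg (r : ℝ) : Fr (-r) = Fr r := by
  unfold Fr
  have h := intervalIntegral.integral_comp_sub_left
    (fun x => Real.log (1 - 2*r*Real.cos x + r^2)) π (a := 0) (b := π)
  rw [sub_self, sub_zero] at h
  rw [← h]
  apply intervalIntegral.integral_congr
  intro θ _
  simp only [Real.cos_pi_sub]
  ring_nf

lemma Fr_sq (r : ℝ) (hr : |r| < 1) : Fr (r^2) = 2 * Fr r := by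
  have hrn : |(-r)| < 1 := by rwa [abs_neg]
  have hA := (aux_cont r hr).intervalIntegrable (μ := volume) (0:ℝ) π
  have hB := (aux_cont (-r) hrn).intervalIntegrable (μ := volume) (0:ℝ) π
  have key : Fr r + Fr (-r)
      = ∫ θ in (0:ℝ)..π, Real.log (1 - 2*(r^2)*Real.cos (2*θ) + (r^2)^2) := by
    unfold Fr
    rw [← intervalIntegral.integral_add hA hB]
    apply intervalIntegral.integral_congr
    intro θ _
    simp only [← Real.log_mul (aux_pos r θ hr).ne' (aux_pos (-r) θ hrn).ne', Real.cos_two_mul]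
    congr 1
    ring
  have h2θ : (∫ θ in (0:ℝ)..π, Real.log (1 - 2*(r^2)*Real.cos (2*θ) + (r^2)^2))
      = (2:ℝ)⁻¹ • ∫ u in (0:ℝ)..2*π, Real.log (1 - 2*(r^2)*Real.cos u + (r^2)^2) := by
    have := intervalIntegral.integral_comp_mul_left
      (fun u => Real.log (1 - 2*(r^2)*Real.cos u + (r^2)^2)) (two_ne_zero (α := ℝ))
      (a := 0) (b := π)
    simpa using this
  have hsecond : (∫ u in π..2*π, Real.log (1 - 2*(r^2)*Real.cos u + (r^2)^2))
      = ∫ u in (0:ℝ)..π, Real.log (1 - 2*(r^2)*Real.cos u + (r^2)^2) := by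
    have h := intervalIntegral.integral_comp_sub_left
      (fun u => Real.log (1 - 2*(r^2)*Real.cos u + (r^2)^2)) (2*π) (a := 0) (b := π)
    have h2 : 2*π - π = π := by ring
    rw [h2, sub_zero] at h
    rw [← h]
    apply intervalIntegral.integral_congr
    intro θ _
    have hc : Real.cos (2*π - θ) = Real.cos θ := by
      rw [Real.cos_sub]
      simp [Real.cos_two_pi, Real.sin_two_pi]
    simp only [hc]
  have hr2 : |r^2| < 1 := by
    rw [abs_pow]
    exact pow_lt_one₀ (abs_nonneg r) hr two_ne_zero
  have hC := (aux_cont (r^2) hr2).intervalIntegrable (μ := volume) (0:ℝ) π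
  have hD := (aux_cont (r^2) hr2).intervalIntegrable (μ := volume) π (2*π)
  have hsplit := intervalIntegral.integral_add_adjacent_intervals hC hD
  have hFneg := Fr_neg r
  rw [smul_eq_mul] at h2θ
  unfold Fr at *
  linarith

lemma Fr_bound (r : ℝ) (hr : |r| < 1) : |Fr r| ≤ π * (-2 * Real.log (1 - |r|)) := by
  have h1r : (0:ℝ) < 1 - |r| := by linarith
  have hC : ∀ θ ∈ Set.uIoc (0:ℝ) π, ‖Real.log (1 - 2*r*Real.cos θ + r^2)‖ ≤ -2 * Real.log (1 - |r|) := by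
    intro θ _
    have hpos := aux_pos r θ hr
    have hlow : (1 - |r|)^2 ≤ 1 - 2*r*Real.cos θ + r^2 := by
      nlinarith [abs_cos_le_one θ, sq_abs r, abs_nonneg r, le_abs_self (r * Real.cos θ),
        abs_mul r (Real.cos θ), mul_le_mul_of_nonneg_left (abs_cos_le_one θ) (abs_nonneg r)]
    have hhigh : 1 - 2*r*Real.cos θ + r^2 ≤ (1 + |r|)^2 := by
      nlinarith [abs_cos_le_one θ, sq_abs r, abs_nonneg r, neg_abs_le (r * Real.cos θ),
        abs_mul r (Real.cos θ), mul_le_mul_of_nonneg_left (abs_cos_le_one θ) (abs_nonneg r)]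
    rw [Real.norm_eq_abs, abs_le]
    constructor
    · have := Real.log_le_log (by positivity) hlow
      rw [Real.log_pow] at this
      push_cast at this
      linarith
    · have h2 := Real.log_le_log hpos hhigh
      rw [Real.log_pow] at h2
      have h3 : Real.log (1 + |r|) ≤ -Real.log (1 - |r|) := by
        rw [← Real.log_inv]
        apply Real.log_le_log (by positivity)
        rw [← one_div, le_div_iff₀ h1r]
        nlinarith [sq_abs r, sq_nonneg r]
      push_cast at h2
      linarith
  have := intervalIntegral.norm_integral_le_of_norm_le_const hC
  rw [Real.norm_eq_abs] at this
  unfold Fr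
  calc |∫ θ in (0:ℝ)..π, Real.log (1 - 2*r*Real.cos θ + r^2)|
      ≤ -2 * Real.log (1 - |r|) * |π - 0| := this
    _ = π * (-2 * Real.log (1 - |r|)) := by
        rw [sub_zero, abs_of_pos Real.pi_pos]; ring

lemma Fr_zero (r : ℝ) (hr : |r| < 1) : Fr r = 0 := by
  have h1r : (0:ℝ) < 1 - |r| := by linarith
  set K := π * (-2 * Real.log (1 - |r|)) with hK
  have hpowlt : ∀ n : ℕ, |r ^ (2^n)| < 1 := by
    intro n
    rw [abs_pow]
    rcases eq_or_lt_of_le (abs_nonneg r) with h | h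
    · rw [← h, zero_pow (Nat.two_pow_pos n).ne']; norm_num
    · have h1 : |r| ^ 2^n ≤ |r| ^ 1 :=
        pow_le_pow_of_le_one (abs_nonneg r) hr.le Nat.one_le_two_pow
      rw [pow_one] at h1
      linarith
  have heq : ∀ n : ℕ, Fr r = Fr (r ^ (2^n)) / 2^n := by
    intro n
    induction n with
    | zero => simp
    | succ n ih =>
      have h2 := Fr_sq (r ^ (2^n)) (hpowlt n)
      rw [← pow_mul, ← pow_succ] at h2
      rw [ih, h2]
      rw [pow_succ]
      field_simp
  have hb : ∀ n : ℕ, |Fr r| ≤ K / 2^n := by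
    intro n
    rw [heq n, abs_div]
    have hle : |r ^ (2^n)| ≤ |r| := by
      rw [abs_pow]
      exact pow_le_of_le_one (abs_nonneg r) hr.le (Nat.two_pow_pos n).ne'
    have hbd := Fr_bound _ (hpowlt n)
    have hmono : -2 * Real.log (1 - |r ^ (2^n)|) ≤ -2 * Real.log (1 - |r|) := by
      have := Real.log_le_log h1r (by linarith : 1 - |r| ≤ 1 - |r ^ (2^n)|)
      linarith
    have habs : |(2:ℝ)^n| = 2^n := abs_of_pos (by positivity)
    rw [habs]
    apply div_le_div_of_nonneg_right ?_ (by positivity)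
    · calc |Fr (r ^ 2^n)| ≤ π * (-2 * Real.log (1 - |r ^ (2^n)|)) := hbd
        _ ≤ K := by rw [hK]; nlinarith [Real.pi_pos]
  have hlim : Filter.Tendsto (fun n : ℕ => K / 2^n) Filter.atTop (nhds 0) := by
    have h2 : Filter.Tendsto (fun n : ℕ => ((1:ℝ)/2)^n) Filter.atTop (nhds 0) :=
      tendsto_pow_atTop_nhds_zero_of_lt_one (by norm_num) (by norm_num)
    have := h2.const_mul K
    simpa [div_eq_mul_inv, mul_comm, ← inv_pow] using this
  have : |Fr r| ≤ 0 := ge_of_tendsto' hlim hb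
  have := abs_nonneg (Fr r)
  rw [← abs_eq_zero]
  linarith

lemma aux_pos' (r θ : ℝ) (hr : |r| < 1) : 0 < 1 + 2*r*Real.cos θ + r^2 := by
  have h := aux_pos (-r) θ (by rwa [abs_neg])
  nlinarith [h, sq_abs r]

lemma logint (c r : ℝ) (hc : 0 < c) (hr : |r| < 1) :
    ∫ θ in (0:ℝ)..π, Real.log (c * (1 + 2*r*Real.cos θ + r^2)) = π * Real.log c := by
  have hrn : |(-r)| < 1 := by rwa [abs_neg]
  have hcong : ∀ θ ∈ Set.uIcc (0:ℝ) π, Real.log (c * (1 + 2*r*Real.cos θ + r^2))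
      = (fun θ => Real.log c + Real.log (1 - 2*(-r)*Real.cos θ + (-r)^2)) θ := by
    intro θ _
    rw [Real.log_mul hc.ne' (aux_pos' r θ hr).ne']
    simp only
    congr 2
    ring
  rw [intervalIntegral.integral_congr hcong,
    intervalIntegral.integral_add intervalIntegrable_const
      ((aux_cont (-r) hrn).intervalIntegrable (μ := volume) 0 π)]
  have hFr : (∫ θ in (0:ℝ)..π, Real.log (1 - 2*(-r)*Real.cos θ + (-r)^2)) = Fr (-r) := rfl
  rw [hFr, Fr_zero (-r) hrn]
  simp [smul_eq_mul]

set_option maxHeartbeats 2000000 in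
theorem stmt_14 (a b : ℝ) (ha : 0 < a) (hab : a < b) :
    ∫ x in a..b, Real.log x / (Real.pi * Real.sqrt ((b - x) * (x - a)))
      = Real.log ((a + b + 2 * Real.sqrt (a * b)) / 4) := by
  have hb : 0 < b := ha.trans hab
  have hα : 0 < Real.sqrt a := Real.sqrt_pos.mpr ha
  have hβ : 0 < Real.sqrt b := Real.sqrt_pos.mpr hb
  have hαβ : Real.sqrt a < Real.sqrt b := Real.sqrt_lt_sqrt ha.le hab
  set α := Real.sqrt a with hαdef
  set β := Real.sqrt b with hβdef
  have ha2 : α^2 = a := Real.sq_sqrt ha.le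
  have hb2 : β^2 = b := Real.sq_sqrt hb.le
  have hsab : Real.sqrt (a*b) = α * β := by rw [hαdef, hβdef, ← Real.sqrt_mul ha.le]
  set p : ℝ := (a+b)/2 with hp
  set q : ℝ := (b-a)/2 with hq
  have hq0 : 0 < q := by rw [hq]; linarith
  set r : ℝ := (β - α)/(β + α) with hrdef
  have hβα0 : (0:ℝ) < β + α := by linarith
  have hr : |r| < 1 := by
    rw [abs_of_nonneg (by rw [hrdef]; exact div_nonneg (by linarith) (by linarith)),
      hrdef, div_lt_one hβα0]
    linarith
  set c : ℝ := (α + β)^2/4 with hcdef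
  have hc : 0 < c := by rw [hcdef]; positivity
  have factor : ∀ θ : ℝ, p + q * Real.cos θ = c * (1 + 2*r*Real.cos θ + r^2) := by
    intro θ
    rw [hp, hq, hcdef, hrdef, ← ha2, ← hb2]
    field_simp
    ring
  set f : ℝ → ℝ := fun θ => p + q * Real.cos θ with hfdef
  set f' : ℝ → ℝ := fun θ => q * (-Real.sin θ) with hf'def
  set g : ℝ → ℝ := fun x => Real.log x / (Real.pi * Real.sqrt ((b - x) * (x - a))) with hgdef
  have hf0 : f 0 = b := by simp only [hfdef, Real.cos_zero, mul_one, hp, hq]; ring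
  have hfπ : f π = a := by
    simp only [hfdef, Real.cos_pi, hp, hq]; ring
  have hderiv : ∀ θ : ℝ, HasDerivAt f (f' θ) θ := by
    intro θ
    exact ((Real.hasDerivAt_cos θ).const_mul q).const_add p
  have hfpos : ∀ θ ∈ Icc (0:ℝ) π, 0 < f θ ∧ f θ ∈ Icc a b := by
    intro θ hθ
    have h1 := Real.neg_one_le_cos θ
    have h2 := Real.cos_le_one θ
    have hfa : a ≤ f θ := by
      simp only [hfdef, hp, hq]; nlinarith
    have hfb : f θ ≤ b := by
      simp only [hfdef, hp, hq]; nlinarith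
    exact ⟨lt_of_lt_of_le ha hfa, hfa, hfb⟩
  have hmapIoo : ∀ θ ∈ Ioo (0:ℝ) π, f θ ∈ Ioo a b := by
    intro θ hθ
    have hs := Real.sin_pos_of_pos_of_lt_pi hθ.1 hθ.2
    have hcs := Real.sin_sq_add_cos_sq θ
    constructor
    · simp only [hfdef, hp, hq]
      nlinarith [sq_nonneg (Real.cos θ + 1), sq_nonneg (Real.cos θ - 1), mul_pos hs hs]
    · simp only [hfdef, hp, hq]
      nlinarith [sq_nonneg (Real.cos θ + 1), sq_nonneg (Real.cos θ - 1), mul_pos hs hs]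
  have hsqrt : ∀ θ ∈ Icc (0:ℝ) π, Real.sqrt ((b - f θ) * (f θ - a)) = q * Real.sin θ := by
    intro θ hθ
    have hsn := Real.sin_nonneg_of_nonneg_of_le_pi hθ.1 hθ.2
    have hcs := Real.sin_sq_add_cos_sq θ
    have hprod : (b - f θ) * (f θ - a) = (q * Real.sin θ)^2 := by
      simp only [hfdef, hp, hq]
      linear_combination (-(((b-a)/2)^2)) * hcs
    rw [hprod, Real.sqrt_sq (by positivity)]
  have hkey : ∀ θ ∈ Ioo (0:ℝ) π, f' θ • g (f θ) = -(Real.log (f θ) / π) := by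
    intro θ hθ
    have hs := Real.sin_pos_of_pos_of_lt_pi hθ.1 hθ.2
    have hsq := hsqrt θ (Ioo_subset_Icc_self hθ)
    simp only [hgdef, hf'def, smul_eq_mul]
    rw [hsq]
    field_simp
  have hae : ∀ᵐ θ : ℝ, θ ≠ 0 ∧ θ ≠ π := by
    have h0 : (volume : Measure ℝ) ({0, π} : Set ℝ) = 0 :=
      ((Set.finite_singleton π).insert 0).measure_zero volume
    rw [ae_iff]
    apply measure_mono_null ?_ h0
    intro x hx
    simp only [Set.mem_setOf_eq, not_and_or, not_not] at hx
    simp only [Set.mem_insert_iff, Set.mem_singleton_iff]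
    tauto
  have hcontlog : ContinuousOn (fun θ => Real.log (f θ) / π) (Icc (0:ℝ) π) := by
    apply ContinuousOn.div_const
    apply ContinuousOn.log
    · exact (continuous_const.add (continuous_const.mul Real.continuous_cos)).continuousOn
    · exact fun θ hθ => ((hfpos θ hθ).1).ne'
  have hinj : Set.InjOn f (Icc (0:ℝ) π) := by
    intro x hx y hy hxy
    apply Real.injOn_cos hx hy
    simp only [hfdef] at hxy
    have : q * Real.cos x = q * Real.cos y := by linarith
    exact mul_left_cancel₀ hq0.ne' this
  have hgcont : ContinuousOn g (f '' Ioo (min (0:ℝ) π) (max (0:ℝ) π)) := by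
    rw [min_eq_left Real.pi_pos.le, max_eq_right Real.pi_pos.le]
    apply ContinuousOn.mono (s := Ioo a b) ?_ (Set.image_subset_iff.mpr hmapIoo)
    apply ContinuousOn.div
    · exact Real.continuousOn_log.mono (fun x hx => by
        simp only [Set.mem_compl_iff, Set.mem_singleton_iff]
        exact (lt_trans ha hx.1).ne')
    · apply ContinuousOn.mul continuousOn_const
      exact ((continuous_const.sub continuous_id).mul
        (continuous_id.sub continuous_const)).sqrt.continuousOn
    · intro x hx
      have h1 : 0 < (b-x)*(x-a) := mul_pos (by linarith [hx.2]) (by linarith [hx.1])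
      exact (mul_pos Real.pi_pos (Real.sqrt_pos.mpr h1)).ne'
  -- integrability of the substituted function
  have hIoo_of : ∀ θ, θ ∈ Icc (0:ℝ) π → θ ≠ 0 ∧ θ ≠ π → θ ∈ Ioo (0:ℝ) π := by
    intro θ hmem hne
    exact ⟨lt_of_le_of_ne hmem.1 (Ne.symm hne.1), lt_of_le_of_ne hmem.2 hne.2⟩
  have hg2 : IntegrableOn (fun x => f' x • (g ∘ f) x) (Set.uIcc (0:ℝ) π) := by
    rw [Set.uIcc_of_le Real.pi_pos.le]
    have hci : IntegrableOn (fun θ => -(Real.log (f θ) / π)) (Icc (0:ℝ) π) :=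
      hcontlog.neg.integrableOn_Icc
    apply hci.congr
    filter_upwards [ae_restrict_mem measurableSet_Icc, ae_restrict_of_ae hae] with θ hmem hne
    exact (hkey θ (hIoo_of θ hmem hne)).symm
  have hg1 : IntegrableOn g (f '' Set.uIcc (0:ℝ) π) := by
    rw [Set.uIcc_of_le Real.pi_pos.le]
    rw [integrableOn_image_iff_integrableOn_abs_deriv_smul measurableSet_Icc
      (fun x _ => (hderiv x).hasDerivWithinAt) hinj g]
    have hci : IntegrableOn (fun θ => Real.log (f θ) / π) (Icc (0:ℝ) π) :=
      hcontlog.integrableOn_Icc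
    apply hci.congr
    filter_upwards [ae_restrict_mem measurableSet_Icc, ae_restrict_of_ae hae] with θ hmem hne
    have hθ := hIoo_of θ hmem hne
    have hs := Real.sin_pos_of_pos_of_lt_pi hθ.1 hθ.2
    have habs : |f' θ| = -f' θ := by
      apply abs_of_nonpos
      simp only [hf'def]
      nlinarith
    rw [habs, neg_smul, hkey θ hθ, neg_neg]
  have hfc : Continuous f := continuous_const.add (continuous_const.mul Real.continuous_cos)
  have hsub := intervalIntegral.integral_comp_smul_deriv''' (a := (0:ℝ)) (b := π)
    (f := f) (f' := f') (g := g)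
    hfc.continuousOn
    (fun x _ => (hderiv x).hasDerivWithinAt)
    hgcont hg1 hg2
  rw [hf0, hfπ] at hsub
  have hmid : ∫ x in (0:ℝ)..π, f' x • (g ∘ f) x = ∫ x in (0:ℝ)..π, -(Real.log (f x) / π) := by
    apply intervalIntegral.integral_congr_ae
    filter_upwards [hae] with θ hne hmem
    have hθ : θ ∈ Ioo (0:ℝ) π := by
      rw [Set.uIoc_of_le Real.pi_pos.le] at hmem
      exact ⟨hmem.1, lt_of_le_of_ne hmem.2 hne.2⟩
    exact hkey θ hθ
  have hlogf : ∫ x in (0:ℝ)..π, Real.log (f x) = π * Real.log c := by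
    have hcong : ∀ θ ∈ Set.uIcc (0:ℝ) π, Real.log (f θ)
        = (fun θ => Real.log (c * (1 + 2*r*Real.cos θ + r^2))) θ := by
      intro θ _
      simp only [hfdef]
      rw [factor θ]
    rw [intervalIntegral.integral_congr hcong]
    exact logint c r hc hr
  have hval : ∫ x in (0:ℝ)..π, -(Real.log (f x) / π) = -Real.log c := by
    rw [intervalIntegral.integral_neg, intervalIntegral.integral_div, hlogf]
    field_simp
  have hfinal : ∫ x in a..b, g x = Real.log c := by
    have hsym := intervalIntegral.integral_symm (a := b) (b := a) (f := g) (μ := volume)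
    rw [hsym, ← hsub, hmid, hval, neg_neg]
  have hcval : c = (a + b + 2*Real.sqrt (a*b))/4 := by
    rw [hcdef, hsab, ← ha2, ← hb2]
    ring
  rw [hfinal, hcval]
end

section
/- Let 0 < a < b, m = (a+b)/2, g = √(ab), and suppose E = (m+g)/2 satisfies E·log E − E = g·log g − g and g·log g = (g − E)·log(E − g). Then (1/2)·log((m²−g²)/4) − (2g²/(m−g)²)·log((m+g)/(2g)) + (3g−m)/(2(m−g)) = 0. -/
theorem stmt_19 (a b m g E : ℝ) (ha : 0 < a) (hab : a < b)
    (hm : m = (a + b) / 2) (hg : g = Real.sqrt (a * b)) (hE : E = (m + g) / 2)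
    (h1 : E * Real.log E - E = g * Real.log g - g)
    (h2 : g * Real.log g = (g - E) * Real.log (E - g)) :
    (1 / 2) * Real.log ((m ^ 2 - g ^ 2) / 4)
      - (2 * g ^ 2 / (m - g) ^ 2) * Real.log ((m + g) / (2 * g))
      + (3 * g - m) / (2 * (m - g)) = 0 := by
  have hb : 0 < b := ha.trans hab
  -- g > 0
  have hg0 : 0 < g := by
    rw [hg]; exact Real.sqrt_pos.mpr (mul_pos ha hb)
  -- g < m (strict AM-GM)
  have hgm : g < m := by
    have hsa : Real.sqrt a < Real.sqrt b := Real.sqrt_lt_sqrt ha.le hab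
    have ha2 : Real.sqrt a ^ 2 = a := Real.sq_sqrt ha.le
    have hb2 : Real.sqrt b ^ 2 = b := Real.sq_sqrt hb.le
    have hgeq : g = Real.sqrt a * Real.sqrt b := by
      rw [hg, Real.sqrt_mul ha.le]
    have hsq : 0 < (Real.sqrt b - Real.sqrt a) ^ 2 := pow_pos (by linarith) 2
    nlinarith [hsq, ha2, hb2]
  have hEg : g < E := by rw [hE]; linarith
  have hE0 : 0 < E := hg0.trans hEg
  have hEg0 : 0 < E - g := by linarith
  have hmg : m - g ≠ 0 := by linarith
  have e1 : (m ^ 2 - g ^ 2) / 4 = E * (E - g) := by rw [hE]; ring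
  have l1 : Real.log ((m ^ 2 - g ^ 2) / 4) = Real.log E + Real.log (E - g) := by
    rw [e1, Real.log_mul hE0.ne' hEg0.ne']
  have e2 : (m + g) / (2 * g) = E / g := by
    rw [hE]; field_simp
  have l2 : Real.log ((m + g) / (2 * g)) = Real.log E - Real.log g := by
    rw [e2, Real.log_div hE0.ne' hg0.ne']
  have key : (E - g) ^ 2 * (Real.log E + Real.log (E - g))
      - g ^ 2 * (Real.log E - Real.log g) + (2 * g - E) * (E - g) = 0 := by
    linear_combination (E - 2 * g) * h1 + (E - g) * h2
  rw [l1, l2]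
  have hmeq : m = 2 * E - g := by rw [hE] at *; linarith
  rw [hmeq]
  have hne : E - g ≠ 0 := hEg0.ne'
  have hne2 : 2 * E - g - g ≠ 0 := ne_of_gt (by linarith)
  have hrw : (1 / 2) * (Real.log E + Real.log (E - g))
      - (2 * g ^ 2 / (2 * E - g - g) ^ 2) * (Real.log E - Real.log g)
      + (3 * g - (2 * E - g)) / (2 * (2 * E - g - g))
      = (1 / (2 * (E - g) ^ 2)) *
        ((E - g) ^ 2 * (Real.log E + Real.log (E - g))
          - g ^ 2 * (Real.log E - Real.log g) + (2 * g - E) * (E - g)) := by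
    field_simp
    ring
  rw [hrw, key, mul_zero]
end
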